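/- arXiv:1806.01803 — 4 statements merged into one kernel-verified Lean document; each statement's English description precedes it below -/
import Mathlib

section
/- A finite set of n affine hyperplanes in R^m partitions R^m into at most r(m,n) = ∑_{i=0}^{m} C(n,i) connected regions (where C(n,i) = 0 for i > n). -/
open Finset

/-- Sign condition: `t` is on the `s` side of level `c`. -/
def scond (c t : ℝ) (s : Bool) : Prop := if s then c < t else t < c

/-- The set of realizable sign vectors of an arrangement of affine functionals. -/
def RS {E : Type} [AddCommGroup E] [Module ℝ E] {n : ℕ}
    (f : Fin n → E →ₗ[ℝ] ℝ) (b : Fin n → ℝ) : Set (Fin n → Bool) :=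
  {s | ∃ x : E, ∀ i, scond (b i) (f i x) (s i)}

lemma pascal_sum (n d : ℕ) :
    ∑ i ∈ range (d + 2), (n + 1).choose i
      = ∑ i ∈ range (d + 2), n.choose i + ∑ i ∈ range (d + 1), n.choose i := by
  induction d with
  | zero =>
    simp [Finset.sum_range_succ, Nat.choose_one_right]
    omega
  | succ d ih =>
    have h : (n + 1).choose (d + 2) = n.choose (d + 1) + n.choose (d + 2) :=
      Nat.choose_succ_succ n (d + 1)
    rw [Finset.sum_range_succ, ih, Finset.sum_range_succ (n := d + 2),
      Finset.sum_range_succ (n := d + 1)]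
    omega

lemma seg_lt {gx gy c t : ℝ} (h1 : gx < c) (h2 : gy < c) (h0 : 0 < t) (h3 : t < 1) :
    gx + t * (gy - gx) < c := by nlinarith

lemma seg_gt {gx gy c t : ℝ} (h1 : c < gx) (h2 : c < gy) (h0 : 0 < t) (h3 : t < 1) :
    c < gx + t * (gy - gx) := by nlinarith

theorem key_count : ∀ (n : ℕ) (E : Type) [AddCommGroup E] [Module ℝ E]
    [FiniteDimensional ℝ E] (f : Fin n → E →ₗ[ℝ] ℝ) (b : Fin n → ℝ) (d : ℕ),
    Module.finrank ℝ E ≤ d → (RS f b).ncard ≤ ∑ i ∈ range (d + 1), n.choose i := by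
  intro n
  induction n with
  | zero =>
    intro E _ _ _ f b d _
    calc (RS f b).ncard ≤ (Set.univ : Set (Fin 0 → Bool)).ncard :=
          Set.ncard_le_ncard (Set.subset_univ _) Set.finite_univ
      _ = 1 := by rw [Set.ncard_univ, Nat.card_eq_fintype_card]; simp
      _ ≤ ∑ i ∈ range (d + 1), Nat.choose 0 i := by
          have := Finset.single_le_sum (f := fun i => Nat.choose 0 i)
            (fun i _ => Nat.zero_le _) (Finset.mem_range.mpr (Nat.succ_pos d))
          simpa using this
  | succ n IH =>
    intro E _ _ _ f b d hd
    classical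
    set g : Fin n → E →ₗ[ℝ] ℝ := fun i => f i.castSucc with hg
    set b' : Fin n → ℝ := fun i => b i.castSucc with hb'
    set S : Set (Fin (n + 1) → Bool) := RS f b with hSdef
    set St : Set (Fin (n + 1) → Bool) := {s ∈ S | s (Fin.last n) = true} with hSt
    set Sf : Set (Fin (n + 1) → Bool) := {s ∈ S | s (Fin.last n) = false} with hSf
    set A : Set (Fin n → Bool) := Fin.init '' St with hA
    set B : Set (Fin n → Bool) := Fin.init '' Sf with hB
    have hSunion : S = St ∪ Sf := by
      ext s
      constructor
      · intro hs
        cases h : s (Fin.last n)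
        · exact Or.inr ⟨hs, h⟩
        · exact Or.inl ⟨hs, h⟩
      · rintro (⟨hs, -⟩ | ⟨hs, -⟩) <;> exact hs
    have injt : Set.InjOn Fin.init St := by
      intro s hs r hr h
      have : Fin.snoc (Fin.init s) (s (Fin.last n)) = Fin.snoc (Fin.init r) (r (Fin.last n)) := by
        rw [h, hs.2, hr.2]
      rwa [Fin.snoc_init_self, Fin.snoc_init_self] at this
    have injf : Set.InjOn Fin.init Sf := by
      intro s hs r hr h
      have : Fin.snoc (Fin.init s) (s (Fin.last n)) = Fin.snoc (Fin.init r) (r (Fin.last n)) := by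
        rw [h, hs.2, hr.2]
      rwa [Fin.snoc_init_self, Fin.snoc_init_self] at this
    have hcard : S.ncard = A.ncard + B.ncard := by
      rw [hA, hB, Set.ncard_image_of_injOn injt, Set.ncard_image_of_injOn injf, hSunion]
      exact Set.ncard_union_eq (by
        rw [Set.disjoint_left]
        rintro s ⟨-, h1⟩ ⟨-, h2⟩
        rw [h1] at h2; exact Bool.noConfusion h2) (Set.toFinite _) (Set.toFinite _)
    have hAsub : A ⊆ RS g b' := by
      rintro s' ⟨s, ⟨⟨x, hx⟩, -⟩, rfl⟩
      exact ⟨x, fun i => hx i.castSucc⟩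
    have hBsub : B ⊆ RS g b' := by
      rintro s' ⟨s, ⟨⟨x, hx⟩, -⟩, rfl⟩
      exact ⟨x, fun i => hx i.castSucc⟩
    have hsum : S.ncard = (A ∪ B).ncard + (A ∩ B).ncard := by
      rw [hcard, Set.ncard_union_add_ncard_inter A B (Set.toFinite _) (Set.toFinite _)]
    by_cases hf0 : f (Fin.last n) = 0
    · -- last functional is zero: A and B are disjoint
      have hABempty : A ∩ B = ∅ := by
        by_contra h
        obtain ⟨s', hs'A, hs'B⟩ := Set.nonempty_iff_ne_empty.mpr h
        obtain ⟨s, ⟨⟨x, hx⟩, hst⟩, rfl⟩ := hs'A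
        obtain ⟨r, ⟨⟨y, hy⟩, hrf⟩, -⟩ := hs'B
        have h1 := hx (Fin.last n)
        have h2 := hy (Fin.last n)
        rw [hst] at h1
        rw [hrf] at h2
        simp [scond, hf0] at h1 h2
        linarith
      have hle : S.ncard ≤ (RS g b').ncard := by
        rw [hsum, hABempty]
        simpa using Set.ncard_le_ncard (Set.union_subset hAsub hBsub) (Set.toFinite _)
      calc S.ncard ≤ (RS g b').ncard := hle
        _ ≤ ∑ i ∈ range (d + 1), n.choose i := IH E g b' d hd
        _ ≤ ∑ i ∈ range (d + 1), (n + 1).choose i :=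
            Finset.sum_le_sum fun i _ => Nat.choose_le_choose i (Nat.le_succ n)
    · -- last functional nonzero
      obtain ⟨v, hv⟩ : ∃ v, f (Fin.last n) v ≠ 0 := by
        by_contra h
        push_neg at h
        exact hf0 (LinearMap.ext fun x => h x)
      cases d with
      | zero =>
        exfalso
        have h0 : Module.finrank ℝ E = 0 := Nat.le_zero.mp hd
        have : Subsingleton E := Module.finrank_zero_iff.mp h0
        exact hv (by rw [Subsingleton.elim v 0, map_zero])
      | succ d' =>
        obtain ⟨p, hLp⟩ : ∃ p, f (Fin.last n) p = b (Fin.last n) :=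
          ⟨(b (Fin.last n) / f (Fin.last n) v) • v, by
            rw [map_smul, smul_eq_mul, div_mul_cancel₀ _ hv]⟩
        have hKrank : Module.finrank ℝ (LinearMap.ker (f (Fin.last n))) ≤ d' := by
          have hsurj : Function.Surjective (f (Fin.last n)) := by
            intro c
            exact ⟨(c / f (Fin.last n) v) • v, by
              rw [map_smul, smul_eq_mul, div_mul_cancel₀ _ hv]⟩
          have hrange : LinearMap.range (f (Fin.last n)) = ⊤ := LinearMap.range_eq_top.mpr hsurj
          have h1 := LinearMap.finrank_range_add_finrank_ker (f (Fin.last n))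
          rw [hrange, finrank_top, Module.finrank_self] at h1
          omega
        have ih2 := IH (LinearMap.ker (f (Fin.last n)))
          (fun i => (g i).comp (LinearMap.ker (f (Fin.last n))).subtype)
          (fun i => b' i - g i p) d' hKrank
        have hABT : A ∩ B ⊆ RS (fun i => (g i).comp (LinearMap.ker (f (Fin.last n))).subtype)
            (fun i => b' i - g i p) := by
          rintro s' ⟨hs'A, hs'B⟩
          obtain ⟨s, ⟨⟨x, hx⟩, hst⟩, rfl⟩ := hs'A
          obtain ⟨r, ⟨⟨y, hy⟩, hrf⟩, hinit⟩ := hs'B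
          have hxg : b (Fin.last n) < f (Fin.last n) x := by
            have h := hx (Fin.last n); rw [hst] at h; simpa [scond] using h
          have hyg : f (Fin.last n) y < b (Fin.last n) := by
            have h := hy (Fin.last n); rw [hrf] at h; simpa [scond] using h
          have hne : f (Fin.last n) x - f (Fin.last n) y ≠ 0 :=
            sub_ne_zero.mpr (ne_of_gt (lt_trans hyg hxg))
          set t : ℝ := (f (Fin.last n) x - b (Fin.last n)) /
            (f (Fin.last n) x - f (Fin.last n) y) with ht
          have ht0 : 0 < t := by
            rw [ht]; exact div_pos (by linarith) (by linarith)
          have ht1 : t < 1 := by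
            rw [ht, div_lt_one (by linarith)]; linarith
          have htmul : t * (f (Fin.last n) x - f (Fin.last n) y)
              = f (Fin.last n) x - b (Fin.last n) := by
            rw [ht]; exact div_mul_cancel₀ _ hne
          have hzK : x + t • (y - x) - p ∈ LinearMap.ker (f (Fin.last n)) := by
            rw [LinearMap.mem_ker]
            simp only [map_sub, map_add, map_smul, smul_eq_mul]
            rw [hLp]
            linear_combination -htmul
          refine ⟨⟨x + t • (y - x) - p, hzK⟩, fun i => ?_⟩
          show scond (b i.castSucc - g i p) (g i (x + t • (y - x) - p)) (s i.castSucc)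
          have hval : g i (x + t • (y - x) - p)
              = g i x + t * (g i y - g i x) - g i p := by
            simp only [map_sub, map_add, map_smul, smul_eq_mul]
          rw [hval]
          have hri : r i.castSucc = s i.castSucc := congrFun hinit i
          have hxi : scond (b i.castSucc) (g i x) (s i.castSucc) := hx i.castSucc
          have hyi : scond (b i.castSucc) (g i y) (s i.castSucc) := by
            have := hy i.castSucc
            rwa [hri] at this
          cases hcase : s i.castSucc
          · rw [hcase] at hxi hyi
            simp only [scond, Bool.false_eq_true, if_false] at hxi hyi ⊢
            have := seg_lt hxi hyi ht0 ht1
            linarith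
          · rw [hcase] at hxi hyi
            simp only [scond, if_true] at hxi hyi ⊢
            have := seg_gt hxi hyi ht0 ht1
            linarith
        have step1 : (A ∪ B).ncard ≤ (RS g b').ncard :=
          Set.ncard_le_ncard (Set.union_subset hAsub hBsub) (Set.toFinite _)
        have step2 : (A ∩ B).ncard
            ≤ (RS (fun i => (g i).comp (LinearMap.ker (f (Fin.last n))).subtype)
                (fun i => b' i - g i p)).ncard :=
          Set.ncard_le_ncard hABT (Set.toFinite _)
        have ih1 : (RS g b').ncard ≤ ∑ i ∈ range (d' + 2), n.choose i :=
          IH E g b' (d' + 1) hd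
        show S.ncard ≤ ∑ i ∈ range (d' + 2), (n + 1).choose i
        rw [hsum, pascal_sum]
        omega

open Classical in
/-- The sign vector of a point. -/
noncomputable def svec {E : Type} [AddCommGroup E] [Module ℝ E] {n : ℕ}
    (f : Fin n → E →ₗ[ℝ] ℝ) (b : Fin n → ℝ) (x : E) : Fin n → Bool :=
  fun i => if b i < f i x then true else false

lemma svec_spec {E : Type} [AddCommGroup E] [Module ℝ E] {n : ℕ}
    (f : Fin n → E →ₗ[ℝ] ℝ) (b : Fin n → ℝ) (x : E) (hx : ∀ i, f i x ≠ b i) :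
    ∀ i, scond (b i) (f i x) (svec f b x i) := by
  intro i
  unfold svec
  by_cases h : b i < f i x
  · simp [scond, h]
  · have h2 : f i x < b i := lt_of_le_of_ne (not_lt.mp h) (hx i)
    simp [scond, h, h2]

/-- The linear functional `x ↦ ∑ j, c j * x j`. -/
def dotL (m : ℕ) (c : Fin m → ℝ) : (Fin m → ℝ) →ₗ[ℝ] ℝ where
  toFun := fun x => ∑ j, c j * x j
  map_add' := by
    intro x y
    simp [mul_add, Finset.sum_add_distrib]
  map_smul' := by
    intro r x
    simp only [Pi.smul_apply, smul_eq_mul, RingHom.id_apply]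
    rw [Finset.mul_sum]
    exact Finset.sum_congr rfl fun j _ => by ring

/-- A finite set of `n` affine hyperplanes in `ℝ^m` partitions `ℝ^m` into at most
`r(m,n) = ∑_{i=0}^{m} C(n,i)` connected regions. -/
theorem affine_arrangement_region_bound (m n : ℕ)
    (a : Fin n → Fin m → ℝ) (b : Fin n → ℝ) (ha : ∀ i, a i ≠ 0) :
    {C : Set (Fin m → ℝ) |
        ∃ x ∈ {x : Fin m → ℝ | ∀ i, ∑ j, a i j * x j ≠ b i},
          C = connectedComponentIn {x : Fin m → ℝ | ∀ i, ∑ j, a i j * x j ≠ b i} x}.ncard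
      ≤ ∑ i ∈ Finset.range (m + 1), n.choose i := by
  classical
  set U : Set (Fin m → ℝ) := {x : Fin m → ℝ | ∀ i, ∑ j, a i j * x j ≠ b i} with hU
  set F : Fin n → (Fin m → ℝ) →ₗ[ℝ] ℝ := fun i => dotL m (a i) with hF
  have hUne : ∀ x ∈ U, ∀ i, F i x ≠ b i := fun x hx i => hx i
  -- convexity of cells
  have hconv : ∀ s : Fin n → Bool,
      Convex ℝ {z : Fin m → ℝ | ∀ i, scond (b i) (F i z) (s i)} := by
    intro s
    have heq : {z : Fin m → ℝ | ∀ i, scond (b i) (F i z) (s i)}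
        = ⋂ i, {z : Fin m → ℝ | scond (b i) (F i z) (s i)} := by
      ext z; simp [Set.mem_iInter]
    rw [heq]
    refine convex_iInter fun i => ?_
    cases h : s i
    · simp only [scond, h, Bool.false_eq_true, if_false]
      exact convex_halfSpace_lt (F i).isLinear (b i)
    · simp only [scond, h, if_true]
      exact convex_halfSpace_gt (F i).isLinear (b i)
  have hsubU : ∀ s : Fin n → Bool,
      {z : Fin m → ℝ | ∀ i, scond (b i) (F i z) (s i)} ⊆ U := by
    intro s z hz i
    have h := hz i
    cases hc : s i <;> rw [hc] at h <;>
      simp only [scond, if_true, Bool.false_eq_true, if_false] at h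
    · exact ne_of_lt h
    · exact (ne_of_lt h).symm
  have key := key_count n (Fin m → ℝ) F b m (by rw [Module.finrank_pi]; simp)
  refine le_trans (Set.ncard_le_ncard_of_injOn
    (fun C => if h : ∃ x ∈ U, C = connectedComponentIn U x
      then svec F b h.choose else fun _ => true) ?_ ?_ (Set.toFinite _)) key
  · intro C hC
    have hC' : ∃ x ∈ U, C = connectedComponentIn U x := hC
    simp only [dif_pos hC']
    exact ⟨hC'.choose, svec_spec F b hC'.choose (hUne _ hC'.choose_spec.1)⟩
  · intro C hC D hD heq
    have hC' : ∃ x ∈ U, C = connectedComponentIn U x := hC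
    have hD' : ∃ x ∈ U, D = connectedComponentIn U x := hD
    simp only [dif_pos hC', dif_pos hD'] at heq
    obtain ⟨hxU, hCx⟩ := hC'.choose_spec
    obtain ⟨hyU, hDy⟩ := hD'.choose_spec
    set x := hC'.choose
    set y := hD'.choose
    have hxc : x ∈ {z : Fin m → ℝ | ∀ i, scond (b i) (F i z) (svec F b x i)} :=
      svec_spec F b x (hUne x hxU)
    have hyc : y ∈ {z : Fin m → ℝ | ∀ i, scond (b i) (F i z) (svec F b x i)} := by
      have := svec_spec F b y (hUne y hyU)
      rw [← heq] at this
      exact this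
    have hpc : IsPreconnected {z : Fin m → ℝ | ∀ i, scond (b i) (F i z) (svec F b x i)} :=
      (hconv _).isPreconnected
    have hsub : {z : Fin m → ℝ | ∀ i, scond (b i) (F i z) (svec F b x i)}
        ⊆ connectedComponentIn U x :=
      hpc.subset_connectedComponentIn hxc (hsubU _)
    have hy : y ∈ connectedComponentIn U x := hsub hyc
    rw [hCx, hDy, connectedComponentIn_eq hy]
end

section
/- A finite set of n linear hyperplanes in R^m (all passing through the origin), with n ≥ 1, partitions R^m into at most r_0(n,m) = 2 ∑_{i=0}^{m-1} C(n-1,i) connected regions. -/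
open Set

variable {m : ℕ}

/-- achieved sign vectors of a family of functionals on a submodule -/
def ach {n : ℕ} (f : Fin n → ((Fin m → ℝ) →ₗ[ℝ] ℝ)) (W : Submodule ℝ (Fin m → ℝ)) :
    Set (Fin n → Bool) :=
  {s | ∃ x ∈ W, ∀ i, f i x ≠ 0 ∧ s i = decide (0 < f i x)}

lemma pascal_sum_s2 (k : ℕ) : ∀ M : ℕ,
    ∑ i ∈ Finset.range (M+1), k.choose i + ∑ i ∈ Finset.range M, k.choose i
      ≤ ∑ i ∈ Finset.range (M+1), (k+1).choose i := by
  intro M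
  induction M with
  | zero => simp
  | succ M ih =>
      rw [Finset.sum_range_succ (f := fun i => (k+1).choose i) (n := M+1),
        Finset.sum_range_succ (f := fun i => k.choose i) (n := M+1),
        Finset.sum_range_succ (f := fun i => k.choose i) (n := M)]
      have h := Nat.choose_succ_succ' k M
      have hb := Finset.sum_range_succ (fun i => k.choose i) M
      omega

lemma finrank_pos_of_mem {W : Submodule ℝ (Fin m → ℝ)} {x : Fin m → ℝ}
    (hxW : x ∈ W) (hx : x ≠ 0) : 0 < Module.finrank ℝ W := by
  have : Nontrivial W := ⟨⟨x, hxW⟩, 0, by simpa [Submodule.mk_eq_zero] using hx⟩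
  exact Module.finrank_pos

lemma ach_card_bound : ∀ n : ℕ, 1 ≤ n → ∀ (f : Fin n → ((Fin m → ℝ) →ₗ[ℝ] ℝ))
    (W : Submodule ℝ (Fin m → ℝ)),
    (ach f W).ncard ≤ 2 * ∑ i ∈ Finset.range (Module.finrank ℝ W), (n-1).choose i := by
  intro n hn
  induction n, hn using Nat.le_induction with
  | base =>
      intro f W
      rcases Set.eq_empty_or_nonempty (ach f W) with hA | ⟨s₀, x₀, hx₀W, hx₀⟩
      · simp [hA]
      · have hx0ne : x₀ ≠ 0 := fun h0 => (hx₀ 0).1 (by simp [h0])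
        have hrank : 0 < Module.finrank ℝ W := finrank_pos_of_mem hx₀W hx0ne
        obtain ⟨M, hM⟩ : ∃ M, Module.finrank ℝ W = M + 1 :=
          ⟨_, (Nat.succ_pred_eq_of_pos hrank).symm⟩
        have hsum : ∑ i ∈ Finset.range (Module.finrank ℝ W), (1-1).choose i = 1 := by
          rw [hM]
          rw [Finset.sum_eq_single 0]
          · simp
          · intro b _ hb
            obtain ⟨c, rfl⟩ := Nat.exists_eq_succ_of_ne_zero hb
            simp [Nat.choose]
          · simp
        rw [hsum]
        calc (ach f W).ncard ≤ (Set.univ : Set (Fin 1 → Bool)).ncard :=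
              Set.ncard_le_ncard (Set.subset_univ _) Set.finite_univ
          _ = 2 := by rw [Set.ncard_univ]; simp [Nat.card_eq_fintype_card]
  | succ n hn IH =>
      intro f W
      rcases Set.eq_empty_or_nonempty (ach f W) with hA | ⟨s₀, x₀, hx₀W, hx₀⟩
      · simp [hA]
      have hx0ne : x₀ ≠ 0 := fun h0 => (hx₀ 0).1 (by simp [h0])
      have hrank : 0 < Module.finrank ℝ W := finrank_pos_of_mem hx₀W hx0ne
      obtain ⟨M, hM⟩ : ∃ M, Module.finrank ℝ W = M + 1 :=
        ⟨_, (Nat.succ_pred_eq_of_pos hrank).symm⟩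
      set lst : Fin (n+1) := Fin.last n with hlst
      set f' : Fin n → ((Fin m → ℝ) →ₗ[ℝ] ℝ) := fun i => f i.castSucc with hf'
      set A : Set (Fin (n+1) → Bool) := ach f W with hA
      set A' : Set (Fin n → Bool) := ach f' W with hA'
      set r : (Fin (n+1) → Bool) → (Fin n → Bool) := fun s i => s i.castSucc with hr
      set A1 : Set (Fin (n+1) → Bool) := {s ∈ A | s lst = true} with hA1
      set A0 : Set (Fin (n+1) → Bool) := {s ∈ A | s lst = false} with hA0
      set K : Submodule ℝ (Fin m → ℝ) := W ⊓ LinearMap.ker (f lst) with hK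
      -- split
      have hsplit : A = A1 ∪ A0 := by
        ext s
        simp only [hA1, hA0, Set.mem_union, Set.mem_setOf_eq, Set.mem_sep_iff]
        rcases Bool.eq_false_or_eq_true (s lst) with h | h <;> tauto
      have hdisj : Disjoint A1 A0 := by
        rw [Set.disjoint_left]
        rintro s ⟨-, h1⟩ ⟨-, h0⟩
        rw [h1] at h0
        simp at h0
      -- injectivity of r on A1 and A0
      have hinj : ∀ b : Bool, Set.InjOn r {s ∈ A | s lst = b} := by
        intro b s hs t ht h
        funext i
        cases i using Fin.lastCases with
        | last => rw [hs.2, ht.2]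
        | cast i => exact congrFun h i
      -- images in A'
      have himg : ∀ b : Bool, r '' {s ∈ A | s lst = b} ⊆ A' := by
        rintro b - ⟨s, ⟨⟨x, hxW, hx⟩, -⟩, rfl⟩
        exact ⟨x, hxW, fun i => (hx i.castSucc)⟩
      -- intersection goes into K
      have hD : r '' A1 ∩ r '' A0 ⊆ ach f' K := by
        rintro s' ⟨⟨sp, ⟨⟨xp, hxpW, hxp⟩, hsp⟩, hrsp⟩, ⟨sm, ⟨⟨xm, hxmW, hxm⟩, hsm⟩, hrsm⟩⟩
        have hlp : 0 < f lst xp := by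
          have h2 := (hxp lst).2
          rw [hsp] at h2
          exact of_decide_eq_true h2.symm
        have hlm : f lst xm < 0 := by
          have h2 := (hxm lst).2
          rw [hsm] at h2
          have := of_decide_eq_false h2.symm
          exact lt_of_le_of_ne (not_lt.1 this) (hxm lst).1
        set c := f lst xp with hc
        set d := f lst xm with hd
        set z := c • xm + (-d) • xp with hz
        have hzW : z ∈ W := W.add_mem (W.smul_mem _ hxmW) (W.smul_mem _ hxpW)
        have hzker : f lst z = 0 := by
          simp only [hz, map_add, map_smul, smul_eq_mul, ← hc, ← hd]
          ring
        refine ⟨z, ⟨hzW, hzker⟩, fun i => ?_⟩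
        have hfz : f' i z = c * f' i xm + (-d) * f' i xp := by
          simp [hz, map_add, map_smul, smul_eq_mul]
        have hspi : s' i = decide (0 < f' i xp) := by
          rw [← hrsp]; exact (hxp i.castSucc).2
        have hsmi : s' i = decide (0 < f' i xm) := by
          rw [← hrsm]; exact (hxm i.castSucc).2
        cases hsi : s' i with
        | true =>
            have hp : 0 < f' i xp := of_decide_eq_true (hsi ▸ hspi).symm
            have hm : 0 < f' i xm := of_decide_eq_true (hsi ▸ hsmi).symm
            have hpos : 0 < f' i z := by
              rw [hfz]
              have := mul_pos hlp hm
              have := mul_pos (neg_pos.mpr hlm) hp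
              nlinarith
            exact ⟨hpos.ne', by simp [hpos]⟩
        | false =>
            have hp : f' i xp < 0 := by
              have := of_decide_eq_false (hsi ▸ hspi).symm
              exact lt_of_le_of_ne (not_lt.1 this) (hxp i.castSucc).1
            have hm : f' i xm < 0 := by
              have := of_decide_eq_false (hsi ▸ hsmi).symm
              exact lt_of_le_of_ne (not_lt.1 this) (hxm i.castSucc).1
            have hneg : f' i z < 0 := by
              rw [hfz]
              nlinarith
            exact ⟨hneg.ne, (decide_eq_false (not_lt.2 hneg.le)).symm⟩
      -- counting
      have hcount : A.ncard ≤ A'.ncard + (r '' A1 ∩ r '' A0).ncard := by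
        have h1 : A.ncard = A1.ncard + A0.ncard := by
          rw [hsplit]
          exact Set.ncard_union_eq hdisj (Set.toFinite _) (Set.toFinite _)
        have h2 : A1.ncard = (r '' A1).ncard := (Set.ncard_image_of_injOn (hinj true)).symm
        have h3 : A0.ncard = (r '' A0).ncard := (Set.ncard_image_of_injOn (hinj false)).symm
        have h4 := Set.ncard_union_add_ncard_inter (r '' A1) (r '' A0)
          (Set.toFinite _) (Set.toFinite _)
        have h5 : (r '' A1 ∪ r '' A0).ncard ≤ A'.ncard :=
          Set.ncard_le_ncard (Set.union_subset (himg true) (himg false)) (Set.toFinite _)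
        omega
      -- bound the intersection
      have hDbound : (r '' A1 ∩ r '' A0).ncard ≤ 2 * ∑ i ∈ Finset.range M, (n-1).choose i := by
        rcases Set.eq_empty_or_nonempty (r '' A1 ∩ r '' A0) with hE | ⟨s', hs'⟩
        · simp [hE]
        · obtain ⟨z, ⟨hzW, hzker⟩, hzach⟩ := hD hs'
          -- show K < W using a point of A1
          obtain ⟨⟨sp, ⟨⟨xp, hxpW, hxp⟩, hsp⟩, -⟩, -⟩ := hs'
          have hlp : 0 < f lst xp := by
            have h2 := (hxp lst).2
            rw [hsp] at h2
            exact of_decide_eq_true h2.symm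
          have hxpK : xp ∉ K := by
            rintro ⟨-, hker⟩
            simp only [SetLike.mem_coe, LinearMap.mem_ker] at hker
            exact hlp.ne' hker
          have hKW : K < W := lt_of_le_of_ne inf_le_left (fun h => hxpK (h ▸ hxpW))
          have hrk : Module.finrank ℝ K < Module.finrank ℝ W :=
            Submodule.finrank_lt_finrank_of_lt hKW
          have hrk' : Module.finrank ℝ K ≤ M := by omega
          calc (r '' A1 ∩ r '' A0).ncard ≤ (ach f' K).ncard :=
                Set.ncard_le_ncard hD (Set.toFinite _)
            _ ≤ 2 * ∑ i ∈ Finset.range (Module.finrank ℝ K), (n-1).choose i := IH f' K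
            _ ≤ 2 * ∑ i ∈ Finset.range M, (n-1).choose i := by
                apply Nat.mul_le_mul_left
                exact Finset.sum_le_sum_of_subset (Finset.range_subset_range.mpr hrk')
      have hA'bound : A'.ncard ≤ 2 * ∑ i ∈ Finset.range (M+1), (n-1).choose i := by
        have := IH f' W
        rwa [hM] at this
      have hn1 : n - 1 + 1 = n := Nat.succ_pred_eq_of_pos hn
      have hps := pascal_sum_s2 (n-1) M
      rw [hn1] at hps
      rw [hM]
      have : (n + 1 - 1) = n := by omega
      rw [this]
      calc A.ncard ≤ A'.ncard + (r '' A1 ∩ r '' A0).ncard := hcount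
        _ ≤ 2 * ∑ i ∈ Finset.range (M+1), (n-1).choose i
            + 2 * ∑ i ∈ Finset.range M, (n-1).choose i := Nat.add_le_add hA'bound hDbound
        _ ≤ 2 * ∑ i ∈ Finset.range (M+1), n.choose i := by omega

/-- A finite set of `n ≥ 1` linear hyperplanes through the origin in `ℝ^m` partitions `ℝ^m`
into at most `r₀(n,m) = 2 ∑_{i=0}^{m-1} C(n-1,i)` connected regions. -/
theorem central_arrangement_region_bound (m n : ℕ) (hn : 1 ≤ n)
    (a : Fin n → Fin m → ℝ) (ha : ∀ i, a i ≠ 0) :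
    {C : Set (Fin m → ℝ) |
        ∃ x ∈ {x : Fin m → ℝ | ∀ i, ∑ j, a i j * x j ≠ 0},
          C = connectedComponentIn {x : Fin m → ℝ | ∀ i, ∑ j, a i j * x j ≠ 0} x}.ncard
      ≤ 2 * ∑ i ∈ Finset.range m, (n - 1).choose i := by
  classical
  set f : Fin n → ((Fin m → ℝ) →ₗ[ℝ] ℝ) := fun i => ∑ j, a i j • LinearMap.proj j with hf
  have hfx : ∀ i x, f i x = ∑ j, a i j * x j := by
    intro i x
    simp [hf, LinearMap.sum_apply]
  set U : Set (Fin m → ℝ) := {x | ∀ i, ∑ j, a i j * x j ≠ 0} with hU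
  have hUf : ∀ x, x ∈ U ↔ ∀ i, f i x ≠ 0 := by
    intro x; simp [hU, hfx]
  -- continuity
  have hcont : ∀ (i : Fin n), Continuous (f i) := fun i =>
    (f i).continuous_of_finiteDimensional
  -- same component → same signs
  have hsign : ∀ x ∈ U, ∀ y ∈ U, y ∈ connectedComponentIn U x →
      ∀ i, (0 < f i x ↔ 0 < f i y) := by
    intro x hx y hy hyx i
    have hpre := isPreconnected_connectedComponentIn (x := x) (F := U)
    have hsub := connectedComponentIn_subset U x
    have hxm : x ∈ connectedComponentIn U x := mem_connectedComponentIn hx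
    have hiv := hpre.intermediate_value hxm hyx ((hcont i).continuousOn)
    have hiv' := hpre.intermediate_value hyx hxm ((hcont i).continuousOn)
    have hnz : ∀ z ∈ connectedComponentIn U x, f i z ≠ 0 := fun z hz =>
      (hUf z).1 (hsub hz) i
    constructor
    · intro hpos
      by_contra hneg
      have hylt : f i y < 0 := lt_of_le_of_ne (not_lt.1 hneg) ((hUf y).1 hy i)
      have : (0:ℝ) ∈ f i '' connectedComponentIn U x :=
        hiv' ⟨le_of_lt hylt, le_of_lt hpos⟩
      obtain ⟨z, hz, hz0⟩ := this
      exact hnz z hz hz0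
    · intro hpos
      by_contra hneg
      have hxlt : f i x < 0 := lt_of_le_of_ne (not_lt.1 hneg) ((hUf x).1 hx i)
      have : (0:ℝ) ∈ f i '' connectedComponentIn U x :=
        hiv ⟨le_of_lt hxlt, le_of_lt hpos⟩
      obtain ⟨z, hz, hz0⟩ := this
      exact hnz z hz hz0
  -- same signs → same component
  have hcomp : ∀ x ∈ U, ∀ y ∈ U, (∀ i, (0 < f i x ↔ 0 < f i y)) →
      connectedComponentIn U x = connectedComponentIn U y := by
    intro x hx y hy hs
    have hseg : segment ℝ x y ⊆ U := by
      rintro z ⟨u, v, hu, hv, huv, rfl⟩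
      rw [hUf]
      intro i
      have hz : f i (u • x + v • y) = u * f i x + v * f i y := by
        simp [map_add, map_smul, smul_eq_mul]
      rw [hz]
      rcases lt_or_gt_of_ne ((hUf x).1 hx i) with hneg | hpos
      · have hyneg : f i y < 0 := by
          have := (hs i)
          have hyne := (hUf y).1 hy i
          rcases lt_or_gt_of_ne hyne with h | h
          · exact h
          · exact absurd (this.2 h) (not_lt.2 (le_of_lt hneg))
        intro heq
        have h1 : u * f i x ≤ 0 := mul_nonpos_iff.mpr (Or.inl ⟨hu, hneg.le⟩)
        have h2 : v * f i y ≤ 0 := mul_nonpos_iff.mpr (Or.inl ⟨hv, hyneg.le⟩)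
        have h1' : u * f i x = 0 := by linarith
        have hu0 : u = 0 := by
          rcases mul_eq_zero.1 h1' with h | h
          · exact h
          · exact absurd h hneg.ne
        have hv1 : v = 1 := by linarith
        rw [hu0, hv1] at heq
        simp only [zero_mul, one_mul, zero_add] at heq
        exact hyneg.ne heq
      · have hypos : 0 < f i y := (hs i).1 hpos
        intro heq
        have h1 : 0 ≤ u * f i x := mul_nonneg hu hpos.le
        have h2 : 0 ≤ v * f i y := mul_nonneg hv hypos.le
        have h1' : u * f i x = 0 := by linarith
        have hu0 : u = 0 := by
          rcases mul_eq_zero.1 h1' with h | h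
          · exact h
          · exact absurd h hpos.ne'
        have hv1 : v = 1 := by linarith
        rw [hu0, hv1] at heq
        simp only [zero_mul, one_mul, zero_add] at heq
        exact hypos.ne' heq
    have hpre : IsPreconnected (segment ℝ x y) := (convex_segment x y).isPreconnected
    have hsc := hpre.subset_connectedComponentIn (left_mem_segment ℝ x y) hseg
    exact connectedComponentIn_eq (hsc (right_mem_segment ℝ x y))
  -- injection into achieved sign vectors
  have key : {C : Set (Fin m → ℝ) | ∃ x ∈ U, C = connectedComponentIn U x}.ncard
      ≤ (ach f (⊤ : Submodule ℝ (Fin m → ℝ))).ncard := by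
    apply Set.ncard_le_ncard_of_injOn
      (fun C => if h : ∃ x ∈ U, C = connectedComponentIn U x then
        (fun i => decide (0 < f i h.choose)) else fun _ => true)
    · rintro C hC
      have hC' : ∃ x ∈ U, C = connectedComponentIn U x := hC
      simp only [dif_pos hC']
      obtain ⟨hx, -⟩ := hC'.choose_spec
      exact ⟨hC'.choose, Submodule.mem_top, fun i => ⟨(hUf _).1 hx i, rfl⟩⟩
    · intro C₁ h₁ C₂ h₂ heq
      have h₁' : ∃ x ∈ U, C₁ = connectedComponentIn U x := h₁
      have h₂' : ∃ x ∈ U, C₂ = connectedComponentIn U x := h₂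
      simp only [dif_pos h₁', dif_pos h₂'] at heq
      obtain ⟨hx₁, hc₁⟩ := h₁'.choose_spec
      obtain ⟨hx₂, hc₂⟩ := h₂'.choose_spec
      have hsame : ∀ i, (0 < f i h₁'.choose ↔ 0 < f i h₂'.choose) := by
        intro i
        have := congrFun heq i
        simp only [decide_eq_decide] at this
        exact this
      rw [hc₁, hc₂, hcomp _ hx₁ _ hx₂ hsame]
  calc {C : Set (Fin m → ℝ) | ∃ x ∈ U, C = connectedComponentIn U x}.ncard
      ≤ (ach f ⊤).ncard := key
    _ ≤ 2 * ∑ i ∈ Finset.range (Module.finrank ℝ (⊤ : Submodule ℝ (Fin m → ℝ))), (n-1).choose i :=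
        ach_card_bound n hn f ⊤
    _ = 2 * ∑ i ∈ Finset.range m, (n-1).choose i := by
        congr 1
        rw [finrank_top, Module.finrank_fin_fun]
end

section
/- Let A be an arrangement of l affine hyperplanes in R^m, and let B be an arrangement consisting of d parallel translates of each hyperplane of A (so |B| = d·l). Then B partitions R^m into at most r_p(m,l,d) = ∑_{i=0}^{m} C(l,i) d^i connected regions. -/
open Finset

/-- The open cell of sign vector `σ`. -/
def Cell {m l d : ℕ} (a : Fin l → Fin m → ℝ) (b : Fin l → Fin d → ℝ)
    (σ : Fin l → Fin d → Bool) : Set (Fin m → ℝ) :=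
  {x | ∀ j k, if σ j k then b j k < ∑ i, a j i * x i else ∑ i, a j i * x i < b j k}

/-- Number of sign patterns of a point `t` ranging over an order-connected set,
relative to `d` thresholds, is at most `1 +` number of thresholds in the set. -/
lemma pattern_count {d : ℕ} (c : Fin d → ℝ) (T : Set ℝ) (hT : T.OrdConnected) :
    {τ : Fin d → Bool | ∃ t ∈ T, ∀ k, if τ k then c k < t else t < c k}.ncard
      ≤ 1 + {k : Fin d | c k ∈ T}.ncard := by
  classical
  set P : Set (Fin d → Bool) :=
    {τ : Fin d → Bool | ∃ t ∈ T, ∀ k, if τ k then c k < t else t < c k} with hP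
  rcases P.eq_empty_or_nonempty with h | h
  · simp [h]
  rcases Nat.eq_zero_or_pos d with hd | hd
  · subst hd
    have : P ⊆ Set.univ := Set.subset_univ P
    calc P.ncard ≤ (Set.univ : Set (Fin 0 → Bool)).ncard := Set.ncard_le_ncard this
      _ = 1 := by rw [Set.ncard_univ]; simp [Nat.card_eq_fintype_card]
      _ ≤ _ := le_self_add
  have hforced : ∀ t : ℝ, ∀ τ, (∀ k, if τ k then c k < t else t < c k) →
      τ = fun k => decide (c k < t) := by
    intro t τ hτ
    funext k
    have := hτ k
    cases hb : τ k
    · rw [hb] at this; simp only [Bool.false_eq_true, if_false] at this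
      simp [not_lt.mpr (le_of_lt this)]
    · rw [hb] at this; simp only [if_true] at this
      simp [this]
  have hwit : ∀ τ ∈ P, ∃ t, t ∈ T ∧ (∀ k, if τ k then c k < t else t < c k) := by
    intro τ hτ; exact hτ
  choose! w hwT hwpat using hwit
  haveI : Nonempty {τ // τ ∈ P} := h.to_subtype
  obtain ⟨⟨τ₀, hτ₀⟩, hmin⟩ := Finite.exists_min (fun τ : {τ // τ ∈ P} => w τ.1)
  have hdet : ∀ τ ∈ P, τ = fun k => decide (c k < w τ) := fun τ hτ =>
    hforced (w τ) τ (hwpat τ hτ)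
  have heqw : ∀ τ₁ ∈ P, ∀ τ₂ ∈ P, w τ₁ = w τ₂ → τ₁ = τ₂ := by
    intro τ₁ h₁ τ₂ h₂ hw
    rw [hdet τ₁ h₁, hdet τ₂ h₂, hw]
  have hstrict : ∀ τ ∈ P, τ ≠ τ₀ → w τ₀ < w τ := by
    intro τ hτ hne
    rcases lt_or_ge (w τ₀) (w τ) with h' | h'
    · exact h'
    · exact absurd (heqw τ hτ τ₀ hτ₀ (le_antisymm h' (hmin ⟨τ, hτ⟩))) hne
  -- if τ ∈ P and w τ₀ < w τ then the "max cut" exists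
  have hex : ∀ τ ∈ P, w τ₀ < w τ →
      (univ.filter (fun k => τ k = true ∧ w τ₀ ≤ c k)).Nonempty := by
    intro τ hτ hlt
    have hne : τ ≠ τ₀ := fun he => absurd (he ▸ rfl) (ne_of_gt hlt)
    by_contra hemp
    apply hne
    funext k
    rcases lt_or_ge (c k) (w τ₀) with hc | hc
    · rw [hdet τ hτ, hdet τ₀ hτ₀]
      simp [hc, lt_trans hc hlt]
    · have h0 : τ₀ k = false := by rw [hdet τ₀ hτ₀]; simp [not_lt.mpr hc]
      have h1 : τ k = false := by
        cases hb : τ k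
        · rfl
        · exact absurd ⟨k, by simp [hb, hc]⟩ hemp
      rw [h0, h1]
  -- the injection
  have hmax : ∀ τ, ∃ k : Fin d, (τ ∈ P ∧ w τ₀ < w τ) →
      ((τ k = true ∧ w τ₀ ≤ c k) ∧ ∀ k', τ k' = true → w τ₀ ≤ c k' → c k' ≤ c k) := by
    intro τ
    by_cases hm : τ ∈ P ∧ w τ₀ < w τ
    · obtain ⟨k, hk, hk2⟩ := Finset.exists_max_image _ c (hex τ hm.1 hm.2)
      simp only [mem_filter, mem_univ, true_and] at hk
      exact ⟨k, fun _ => ⟨hk, fun k' h1 h2 => hk2 k' (by simp [h1, h2])⟩⟩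
    · exact ⟨⟨0, hd⟩, fun h => absurd h hm⟩
  choose F hFspec using hmax
  have hFlt : ∀ τ, (hm : τ ∈ P ∧ w τ₀ < w τ) → c (F τ) < w τ := by
    intro τ hm
    have := hwpat τ hm.1 (F τ)
    rw [(hFspec τ hm).1.1] at this; simpa using this
  have hmaps : ∀ τ ∈ P \ {τ₀}, F τ ∈ {k : Fin d | c k ∈ T} := by
    rintro τ ⟨hτ, hne⟩
    simp only [Set.mem_singleton_iff] at hne
    have hm : τ ∈ P ∧ w τ₀ < w τ := ⟨hτ, hstrict τ hτ hne⟩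
    exact hT.out (hwT τ₀ hτ₀) (hwT τ hτ) ⟨(hFspec τ hm).1.2, le_of_lt (hFlt τ hm)⟩
  have key : ∀ τ₁, (τ₁ ∈ P ∧ w τ₀ < w τ₁) → ∀ τ₂, (τ₂ ∈ P ∧ w τ₀ < w τ₂) →
      w τ₁ < w τ₂ → c (F τ₁) < c (F τ₂) := by
    rintro τ₁ hm₁ τ₂ hm₂ hw
    -- find k' with τ₂ k' = true, τ₁ k' = false
    have hne : τ₁ ≠ τ₂ := fun he => absurd (he ▸ rfl) (ne_of_gt hw)
    have hexk : ∃ k, τ₂ k = true ∧ τ₁ k = false := by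
      by_contra hc
      push_neg at hc
      apply hne
      funext k
      rcases lt_or_ge (c k) (w τ₁) with h' | h'
      · rw [hdet τ₁ hm₁.1, hdet τ₂ hm₂.1]; simp [h', lt_trans h' hw]
      · have h1 : τ₁ k = false := by rw [hdet τ₁ hm₁.1]; simp [not_lt.mpr h']
        have h2 : τ₂ k = false := by
          cases hb : τ₂ k
          · rfl
          · exact absurd (hc k hb) (by simp [h1])
        rw [h1, h2]
    obtain ⟨k', hk2, hk1⟩ := hexk
    have hck1 : w τ₁ < c k' := by
      have := hwpat τ₁ hm₁.1 k'
      rw [hk1] at this; simp only [Bool.false_eq_true, if_false] at this; exact this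
    have h2 : c k' ≤ c (F τ₂) :=
      (hFspec τ₂ hm₂).2 k' hk2 (le_of_lt (lt_trans hm₁.2 hck1))
    exact lt_of_lt_of_le (lt_trans (hFlt τ₁ hm₁) hck1) h2
  have hinj : Set.InjOn F (P \ {τ₀}) := by
    rintro τ₁ ⟨h₁, hne₁⟩ τ₂ ⟨h₂, hne₂⟩ heq
    simp only [Set.mem_singleton_iff] at hne₁ hne₂
    have hm₁ : τ₁ ∈ P ∧ w τ₀ < w τ₁ := ⟨h₁, hstrict τ₁ h₁ hne₁⟩
    have hm₂ : τ₂ ∈ P ∧ w τ₀ < w τ₂ := ⟨h₂, hstrict τ₂ h₂ hne₂⟩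
    rcases lt_trichotomy (w τ₁) (w τ₂) with h' | h' | h'
    · exact absurd (heq ▸ key τ₁ hm₁ τ₂ hm₂ h') (lt_irrefl _)
    · exact heqw τ₁ h₁ τ₂ h₂ h'
    · exact absurd (heq ▸ key τ₂ hm₂ τ₁ hm₁ h') (lt_irrefl _)
  have hP0 : P = insert τ₀ (P \ {τ₀}) := by
    rw [Set.insert_diff_singleton, Set.insert_eq_self.mpr hτ₀]
  calc P.ncard = (insert τ₀ (P \ {τ₀})).ncard := by rw [← hP0]
    _ ≤ 1 + (P \ {τ₀}).ncard := by rw [add_comm]; exact Set.ncard_insert_le _ _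
    _ ≤ 1 + {k : Fin d | c k ∈ T}.ncard := by
        gcongr
        exact Set.ncard_le_ncard_of_injOn F hmaps hinj (Set.toFinite _)

lemma dot_linear {m : ℕ} (α : Fin m → ℝ) :
    IsLinearMap ℝ (fun x : Fin m → ℝ => ∑ i, α i * x i) := by
  constructor
  · intro x y; simp [mul_add, Finset.sum_add_distrib]
  · intro c x; simp only [Pi.smul_apply, smul_eq_mul, Finset.mul_sum]
    exact Finset.sum_congr rfl fun i _ => by ring
lemma dot_continuous {m : ℕ} (α : Fin m → ℝ) :
    Continuous (fun x : Fin m → ℝ => ∑ i, α i * x i) :=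
  continuous_finset_sum _ fun i _ => continuous_const.mul (continuous_apply i)

lemma cell_convex {m l d : ℕ} (a : Fin l → Fin m → ℝ) (b : Fin l → Fin d → ℝ)
    (σ : Fin l → Fin d → Bool) : Convex ℝ (Cell a b σ) := by
  have : Cell a b σ = ⋂ j, ⋂ k,
      (if σ j k then {x : Fin m → ℝ | b j k < ∑ i, a j i * x i}
        else {x : Fin m → ℝ | ∑ i, a j i * x i < b j k}) := by
    ext x
    simp only [Cell, Set.mem_setOf_eq, Set.mem_iInter]
    refine forall₂_congr fun j k => ?_
    by_cases h : σ j k <;> simp [h]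
  rw [this]
  refine convex_iInter fun j => convex_iInter fun k => ?_
  by_cases h : σ j k <;> simp only [h, if_true, if_false]
  · exact convex_halfSpace_gt (dot_linear (a j)) _
  · exact convex_halfSpace_lt (dot_linear (a j)) _

lemma cell_open {m l d : ℕ} (a : Fin l → Fin m → ℝ) (b : Fin l → Fin d → ℝ)
    (σ : Fin l → Fin d → Bool) : IsOpen (Cell a b σ) := by
  have : Cell a b σ = ⋂ j, ⋂ k,
      (if σ j k then {x : Fin m → ℝ | b j k < ∑ i, a j i * x i}
        else {x : Fin m → ℝ | ∑ i, a j i * x i < b j k}) := by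
    ext x
    simp only [Cell, Set.mem_setOf_eq, Set.mem_iInter]
    refine forall₂_congr fun j k => ?_
    by_cases h : σ j k <;> simp [h]
  rw [this]
  refine isOpen_iInter_of_finite fun j => isOpen_iInter_of_finite fun k => ?_
  by_cases h : σ j k <;> simp only [h, if_true, if_false]
  · exact isOpen_lt continuous_const (dot_continuous (a j))
  · exact isOpen_lt (dot_continuous (a j)) continuous_const

/-- The connected component of `x` in the complement of the arrangement is its cell. -/
lemma component_eq_cell {m l d : ℕ} (a : Fin l → Fin m → ℝ) (b : Fin l → Fin d → ℝ)
    (x : Fin m → ℝ) (hx : x ∈ {x : Fin m → ℝ | ∀ j k, ∑ i, a j i * x i ≠ b j k}) :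
    connectedComponentIn {x : Fin m → ℝ | ∀ j k, ∑ i, a j i * x i ≠ b j k} x
      = Cell a b (fun j k => decide (b j k < ∑ i, a j i * x i)) := by
  classical
  set S := {x : Fin m → ℝ | ∀ j k, ∑ i, a j i * x i ≠ b j k} with hS
  set σ := fun j k => decide (b j k < ∑ i, a j i * x i) with hσ
  have hxcell : x ∈ Cell a b σ := by
    intro j k
    simp only [hσ]
    rcases lt_or_gt_of_ne (hx j k) with h | h
    · simp [not_lt.mpr (le_of_lt h), h]
    · simp [h]
  have hcellS : Cell a b σ ⊆ S := by
    intro y hy j k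
    have := hy j k
    by_cases h : σ j k
    · rw [if_pos h] at this; exact (ne_of_gt this)
    · rw [if_neg h] at this; exact (ne_of_lt this)
  apply Set.Subset.antisymm
  · -- component ⊆ cell
    set V := ⋃ j, ⋃ k,
        (if σ j k then {y : Fin m → ℝ | ∑ i, a j i * y i < b j k}
          else {y : Fin m → ℝ | b j k < ∑ i, a j i * y i}) with hV
    have hVopen : IsOpen V := by
      refine isOpen_iUnion fun j => isOpen_iUnion fun k => ?_
      by_cases h : σ j k <;> simp only [h, if_true, if_false]
      · exact isOpen_lt (dot_continuous (a j)) continuous_const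
      · exact isOpen_lt continuous_const (dot_continuous (a j))
    have hsub : S ⊆ Cell a b σ ∪ V := by
      intro y hy
      by_cases hyc : y ∈ Cell a b σ
      · exact Or.inl hyc
      · right
        simp only [Cell, Set.mem_setOf_eq] at hyc
        push_neg at hyc
        obtain ⟨j, k, hjk⟩ := hyc
        refine Set.mem_iUnion.mpr ⟨j, Set.mem_iUnion.mpr ⟨k, ?_⟩⟩
        by_cases h : σ j k <;> simp only [h, if_true, if_false] at hjk ⊢
        · exact lt_of_le_of_ne (not_lt.mp hjk) (hy j k)
        · exact lt_of_le_of_ne (not_lt.mp hjk) (Ne.symm (hy j k))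
    have hdisj : Disjoint (Cell a b σ) V := by
      rw [Set.disjoint_left]
      intro y hyc hyv
      simp only [hV, Set.mem_iUnion] at hyv
      obtain ⟨j, k, hjk⟩ := hyv
      have := hyc j k
      by_cases h : σ j k <;> simp only [h, if_true, if_false] at hjk this
      · exact absurd hjk (not_lt.mpr (le_of_lt this))
      · exact absurd hjk (not_lt.mpr (le_of_lt this))
    refine IsPreconnected.subset_left_of_subset_union (cell_open a b σ) hVopen hdisj
      ((connectedComponentIn_subset S x).trans hsub) ?_
      (isPreconnected_connectedComponentIn)
    exact ⟨x, mem_connectedComponentIn hx, hxcell⟩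
  · exact IsPreconnected.subset_connectedComponentIn
      ((cell_convex a b σ).isPreconnected) hxcell hcellS

lemma rp_succ (l d n : ℕ) :
    ∑ i ∈ range (n+2), (l+1).choose i * d ^ i
      = ∑ i ∈ range (n+2), l.choose i * d ^ i + d * ∑ i ∈ range (n+1), l.choose i * d ^ i := by
  rw [Finset.sum_range_succ' (fun i => (l+1).choose i * d^i),
      Finset.sum_range_succ' (fun i => l.choose i * d^i)]
  simp only [Nat.choose_succ_succ, add_mul, Finset.sum_add_distrib, Finset.mul_sum,
    pow_succ, Nat.choose_zero_right, pow_zero, mul_one, Nat.succ_eq_add_one]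
  have : ∀ x : ℕ, d * (l.choose x * d ^ x) = l.choose x * (d ^ x * d) := fun x => by ring
  simp only [this]
  omega

lemma rp_mono (l d m : ℕ) :
    ∑ i ∈ range (m+1), l.choose i * d ^ i ≤ ∑ i ∈ range (m+1), (l+1).choose i * d ^ i := by
  gcongr with i hi
  exact Nat.le_succ l

lemma restrict_dot {n : ℕ} (α : Fin (n+1) → ℝ) (i0 : Fin (n+1)) (hα : α i0 ≠ 0)
    (v : ℝ) (f : Fin (n+1) → ℝ) (x : Fin (n+1) → ℝ) (hx : ∑ i, α i * x i = v) :
    ∑ i : Fin n, (f (i0.succAbove i) - f i0 / α i0 * α (i0.succAbove i)) * x (i0.succAbove i)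
      = ∑ i, f i * x i - f i0 / α i0 * v := by
  have h1 := Fin.sum_univ_succAbove (fun i => f i * x i) i0
  have h2 := Fin.sum_univ_succAbove (fun i => α i * x i) i0
  rw [← hx, h2, h1]
  simp only [sub_mul, Finset.sum_sub_distrib, mul_add, Finset.mul_sum]
  have : ∀ i : Fin n, f i0 / α i0 * α (i0.succAbove i) * x (i0.succAbove i)
      = f i0 / α i0 * (α (i0.succAbove i) * x (i0.succAbove i)) := fun i => by ring
  simp only [this]
  field_simp
  ring
theorem core_count (l : ℕ) : ∀ (m d : ℕ) (a : Fin l → Fin m → ℝ) (b : Fin l → Fin d → ℝ),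
    {σ : Fin l → Fin d → Bool | (Cell a b σ).Nonempty}.ncard
      ≤ ∑ i ∈ Finset.range (m + 1), l.choose i * d ^ i := by
  induction l with
  | zero =>
    intro m d a b
    calc {σ : Fin 0 → Fin d → Bool | (Cell a b σ).Nonempty}.ncard
        ≤ (Set.univ : Set (Fin 0 → Fin d → Bool)).ncard :=
          Set.ncard_le_ncard (Set.subset_univ _)
      _ = 1 := by rw [Set.ncard_univ]; simp [Nat.card_eq_fintype_card]
      _ ≤ _ := by
          have : 0 ∈ Finset.range (m+1) := by simp
          calc 1 = Nat.choose 0 0 * d ^ 0 := by simp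
            _ ≤ _ := Finset.single_le_sum (f := fun i => Nat.choose 0 i * d ^ i)
                (fun i _ => Nat.zero_le _) this
  | succ l ih =>
    intro m d a b
    classical
    set a' : Fin l → Fin m → ℝ := fun j => a j.castSucc with ha'
    set b' : Fin l → Fin d → ℝ := fun j => b j.castSucc with hb'
    set α : Fin m → ℝ := a (Fin.last l) with hα
    set c : Fin d → ℝ := b (Fin.last l) with hc
    set res : (Fin (l+1) → Fin d → Bool) → (Fin l → Fin d → Bool) :=
      fun σ j => σ j.castSucc with hres
    -- membership splitting
    have hsplit : ∀ (σ : Fin (l+1) → Fin d → Bool) (x : Fin m → ℝ),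
        x ∈ Cell a b σ ↔ x ∈ Cell a' b' (res σ) ∧
          (∀ k, if σ (Fin.last l) k then c k < ∑ i, α i * x i
            else ∑ i, α i * x i < c k) := by
      intro σ x
      constructor
      · intro hx
        exact ⟨fun j k => hx j.castSucc k, fun k => hx (Fin.last l) k⟩
      · rintro ⟨h1, h2⟩ j k
        induction j using Fin.lastCases with
        | last => exact h2 k
        | cast j => exact h1 j k
    set A : Finset (Fin (l+1) → Fin d → Bool) :=
      Finset.univ.filter (fun σ => (Cell a b σ).Nonempty) with hA
    set A' : Finset (Fin l → Fin d → Bool) :=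
      Finset.univ.filter (fun σ' => (Cell a' b' σ').Nonempty) with hA'
    have hncardA : {σ : Fin (l+1) → Fin d → Bool | (Cell a b σ).Nonempty}.ncard = A.card := by
      rw [hA]
      rw [← Set.ncard_coe_finset]
      congr 1
      ext σ; simp
    have hncardA' : {σ : Fin l → Fin d → Bool | (Cell a' b' σ).Nonempty}.ncard = A'.card := by
      rw [hA', ← Set.ncard_coe_finset]
      congr 1
      ext σ; simp
    have hIH' : A'.card ≤ ∑ i ∈ Finset.range (m + 1), l.choose i * d ^ i := by
      rw [← hncardA']; exact ih m d a' b'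
    -- case α = 0
    by_cases hα0 : α = 0
    · have hinj : Set.InjOn res ↑A := by
        intro σ₁ h₁ σ₂ h₂ heq
        simp only [hA, Finset.coe_filter, Set.mem_setOf_eq, Finset.mem_univ, true_and] at h₁ h₂
        obtain ⟨x₁, hx₁⟩ := h₁
        obtain ⟨x₂, hx₂⟩ := h₂
        funext j k
        induction j using Fin.lastCases with
        | last =>
          have e₁ := ((hsplit σ₁ x₁).mp hx₁).2 k
          have e₂ := ((hsplit σ₂ x₂).mp hx₂).2 k
          rw [hα0] at e₁ e₂
          simp only [Pi.zero_apply, zero_mul, Finset.sum_const_zero] at e₁ e₂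
          cases hb₁ : σ₁ (Fin.last l) k <;> cases hb₂ : σ₂ (Fin.last l) k <;>
            rw [hb₁] at e₁ <;> rw [hb₂] at e₂ <;> simp_all
          · linarith
          · linarith
        | cast j => exact congrFun (congrFun heq j) k
      have hAcard : A.card ≤ A'.card := by
        apply Finset.card_le_card_of_injOn res _ hinj
        intro σ hσ
        simp only [Finset.mem_coe, hA, Finset.mem_filter, Finset.mem_univ, true_and] at hσ
        obtain ⟨x, hx⟩ := hσ
        simp only [Finset.mem_coe, hA', Finset.mem_filter, Finset.mem_univ, true_and]
        exact ⟨x, ((hsplit σ x).mp hx).1⟩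
      rw [hncardA]
      calc A.card ≤ A'.card := hAcard
        _ ≤ ∑ i ∈ Finset.range (m + 1), l.choose i * d ^ i := hIH'
        _ ≤ _ := rp_mono l d m
    -- case α ≠ 0
    · -- m must be positive
      rcases m with - | n
      · exact absurd (funext fun i => absurd i.pos (by simp [LT.lt.not_gt i.2])) hα0
      obtain ⟨i0, hi0⟩ : ∃ i0, α i0 ≠ 0 := Function.ne_iff.mp hα0
      -- pattern sets
      set T : (Fin l → Fin d → Bool) → Set ℝ :=
        fun σ' => (fun x => ∑ i, α i * x i) '' Cell a' b' σ' with hT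
      set Pat : (Fin l → Fin d → Bool) → Set (Fin d → Bool) :=
        fun σ' => {τ | ∃ t ∈ T σ', ∀ k, if τ k then c k < t else t < c k} with hPat
      set cutF : (Fin l → Fin d → Bool) → Finset (Fin d) :=
        fun σ' => Finset.univ.filter (fun k => c k ∈ T σ') with hcut
      -- fiberwise count
      have hfiber : A.card = ∑ σ' ∈ A', (A.filter (fun σ => res σ = σ')).card := by
        apply Finset.card_eq_sum_card_fiberwise
        intro σ hσ
        simp only [Finset.mem_coe, hA, Finset.mem_filter, Finset.mem_univ, true_and] at hσ
        obtain ⟨x, hx⟩ := hσ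
        simp only [Finset.mem_coe, hA', Finset.mem_filter, Finset.mem_univ, true_and]
        exact ⟨x, ((hsplit σ x).mp hx).1⟩
      have hfibP : ∀ σ' ∈ A', (A.filter (fun σ => res σ = σ')).card ≤ (Pat σ').ncard := by
        intro σ' _
        have hfin : (Pat σ').Finite := Set.toFinite _
        rw [Set.ncard_eq_toFinset_card _ hfin]
        apply Finset.card_le_card_of_injOn (fun σ => σ (Fin.last l))
        · intro σ hσ
          simp only [Finset.mem_coe, Finset.mem_filter, hA, Finset.mem_univ, true_and] at hσ
          obtain ⟨⟨x, hx⟩, hres'⟩ := hσ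
          rw [Finset.mem_coe, Set.Finite.mem_toFinset]
          obtain ⟨h1, h2⟩ := (hsplit σ x).mp hx
          exact ⟨∑ i, α i * x i, ⟨x, hres' ▸ h1, rfl⟩, h2⟩
        · intro σ₁ h₁ σ₂ h₂ heq
          simp only [Finset.coe_filter, Set.mem_setOf_eq] at h₁ h₂
          funext j k
          induction j using Fin.lastCases with
          | last => exact congrFun heq k
          | cast j =>
            have := h₁.2.trans h₂.2.symm
            exact congrFun (congrFun this j) k
      have hPatcut : ∀ σ' ∈ A', (Pat σ').ncard ≤ 1 + (cutF σ').card := by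
        intro σ' _
        have hconv : Convex ℝ (T σ') := by
          rw [hT]
          have := (cell_convex a' b' σ').linear_image (IsLinearMap.mk' _ (dot_linear α))
          exact this
        have := pattern_count c (T σ') hconv.ordConnected
        refine this.trans ?_
        gcongr
        rw [← Set.ncard_coe_finset]
        apply le_of_eq
        congr 1
        ext k; simp [hcut]
      -- swap the sum
      have hswap : ∑ σ' ∈ A', (cutF σ').card
          = ∑ k : Fin d, (A'.filter (fun σ' => c k ∈ T σ')).card := by
        simp only [hcut, Finset.card_filter]
        rw [Finset.sum_comm]
      -- each restricted count
      have hrestr : ∀ k : Fin d, (A'.filter (fun σ' => c k ∈ T σ')).card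
          ≤ ∑ i ∈ Finset.range (n + 1), l.choose i * d ^ i := by
        intro k
        set a2 : Fin l → Fin n → ℝ :=
          fun j i => a' j (i0.succAbove i) - a' j i0 / α i0 * α (i0.succAbove i) with ha2
        set b2 : Fin l → Fin d → ℝ :=
          fun j k' => b' j k' - a' j i0 / α i0 * c k with hb2
        have hsub : (A'.filter (fun σ' => c k ∈ T σ'))
            ⊆ Finset.univ.filter (fun σ' => (Cell a2 b2 σ').Nonempty) := by
          intro σ' hσ'
          simp only [Finset.mem_filter, Finset.mem_univ, true_and] at hσ' ⊢
          obtain ⟨-, x, hxcell, hxdot⟩ := hσ'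
          refine ⟨fun i => x (i0.succAbove i), ?_⟩
          intro j k'
          have hdot := restrict_dot α i0 hi0 (c k) (a' j) x hxdot
          have hx' := hxcell j k'
          cases hs : σ' j k' <;> rw [hs] at hx' <;>
            simp only [Bool.false_eq_true, if_false, if_true] at hx' ⊢
          · show ∑ i, a2 j i * x (i0.succAbove i) < b2 j k'
            rw [ha2, hb2]; simp only
            rw [hdot]
            linarith
          · show b2 j k' < ∑ i, a2 j i * x (i0.succAbove i)
            rw [ha2, hb2]; simp only
            rw [hdot]
            linarith
        calc (A'.filter (fun σ' => c k ∈ T σ')).card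
            ≤ (Finset.univ.filter (fun σ' => (Cell a2 b2 σ').Nonempty)).card :=
              Finset.card_le_card hsub
          _ = {σ' : Fin l → Fin d → Bool | (Cell a2 b2 σ').Nonempty}.ncard := by
              rw [← Set.ncard_coe_finset]; congr 1; ext σ'; simp
          _ ≤ _ := ih n d a2 b2
      -- assemble
      rw [hncardA, hfiber]
      calc ∑ σ' ∈ A', (A.filter (fun σ => res σ = σ')).card
          ≤ ∑ σ' ∈ A', (1 + (cutF σ').card) := by
            refine Finset.sum_le_sum fun σ' hσ' => ?_
            exact (hfibP σ' hσ').trans (hPatcut σ' hσ')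
        _ = A'.card + ∑ σ' ∈ A', (cutF σ').card := by
            rw [Finset.sum_add_distrib]; simp [mul_one]
        _ = A'.card + ∑ k : Fin d, (A'.filter (fun σ' => c k ∈ T σ')).card := by rw [hswap]
        _ ≤ (∑ i ∈ Finset.range (n + 2), l.choose i * d ^ i)
            + ∑ k : Fin d, ∑ i ∈ Finset.range (n + 1), l.choose i * d ^ i :=
            add_le_add hIH' (Finset.sum_le_sum fun k _ => hrestr k)
        _ = (∑ i ∈ Finset.range (n + 2), l.choose i * d ^ i)
            + d * ∑ i ∈ Finset.range (n + 1), l.choose i * d ^ i := by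
            rw [Finset.sum_const, Finset.card_univ, Fintype.card_fin, smul_eq_mul]
        _ = _ := (rp_succ l d n).symm
/-- An arrangement `B` of `d` parallel translates of each of `l` hyperplanes in `ℝ^m`
(`|B| = d·l`) partitions `ℝ^m` into at most `∑_{i=0}^{m} C(l,i) d^i` connected regions.
Hyperplane `(j,k)` is `{x : aⱼᵀ x = b j k}`. -/
theorem parallel_arrangement_region_bound (m l d : ℕ)
    (a : Fin l → Fin m → ℝ) (b : Fin l → Fin d → ℝ) (ha : ∀ j, a j ≠ 0) :
    {C : Set (Fin m → ℝ) |
        ∃ x ∈ {x : Fin m → ℝ | ∀ j k, ∑ i, a j i * x i ≠ b j k},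
          C = connectedComponentIn {x : Fin m → ℝ | ∀ j k, ∑ i, a j i * x i ≠ b j k} x}.ncard
      ≤ ∑ i ∈ Finset.range (m + 1), l.choose i * d ^ i := by
  classical
  have hsub : {C : Set (Fin m → ℝ) |
        ∃ x ∈ {x : Fin m → ℝ | ∀ j k, ∑ i, a j i * x i ≠ b j k},
          C = connectedComponentIn {x : Fin m → ℝ | ∀ j k, ∑ i, a j i * x i ≠ b j k} x}
      ⊆ (fun σ => Cell a b σ) '' {σ : Fin l → Fin d → Bool | (Cell a b σ).Nonempty} := by
    rintro C ⟨x, hx, rfl⟩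
    refine ⟨fun j k => decide (b j k < ∑ i, a j i * x i), ?_, (component_eq_cell a b x hx).symm⟩
    refine ⟨x, ?_⟩
    intro j k
    simp only
    rcases lt_or_gt_of_ne (hx j k) with h | h
    · simp [not_lt.mpr (le_of_lt h), h]
    · simp [h]
  calc _ ≤ ((fun σ => Cell a b σ) ''
        {σ : Fin l → Fin d → Bool | (Cell a b σ).Nonempty}).ncard :=
        Set.ncard_le_ncard hsub ((Set.toFinite _).image _)
    _ ≤ {σ : Fin l → Fin d → Bool | (Cell a b σ).Nonempty}.ncard :=
        Set.ncard_image_le (Set.toFinite _)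
    _ ≤ _ := core_count l m d a b
end

section
/- Let A be an arrangement of n hyperplanes in R^m given by rows of a full-row-rank system. If every m × m submatrix of the n × m normal matrix A has nonzero determinant (general position) and n ≥ m, then the arrangement attains exactly ∑_{i=0}^{m} C(n,i) regions provided additionally no point lies on more than m hyperplanes. -/
open Finset

namespace GPRC

open scoped Classical

variable {m N : ℕ}

/-- The affine functional of hyperplane `i`. -/
def lf (a : Fin N → Fin m → ℝ) (b : Fin N → ℝ) (i : Fin N) (x : Fin m → ℝ) : ℝ :=
  (∑ j, a i j * x j) - b i

lemma lf_line (a : Fin N → Fin m → ℝ) (b : Fin N → ℝ) (i : Fin N) (x y : Fin m → ℝ) (t : ℝ) :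
    lf a b i (x + t • (y - x)) = lf a b i x + t * (lf a b i y - lf a b i x) := by
  have h : ∀ j ∈ Finset.univ, a i j * ((x + t • (y - x)) j)
      = (a i j * x j) + (t * (a i j * y j) - t * (a i j * x j)) := by
    intro j _
    simp only [Pi.add_apply, Pi.smul_apply, Pi.sub_apply, smul_eq_mul]
    ring
  simp only [lf, Finset.sum_congr rfl h, Finset.sum_add_distrib, Finset.sum_sub_distrib,
    ← Finset.mul_sum]
  ring

lemma lf_cont (a : Fin N → Fin m → ℝ) (b : Fin N → ℝ) (i : Fin N) : Continuous (lf a b i) := by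
  unfold lf; fun_prop

/-- affine subsets of `ℝ^m`, hand-rolled. -/
def AffS (A : Set (Fin m → ℝ)) : Prop :=
  ∀ x ∈ A, ∀ y ∈ A, ∀ t : ℝ, x + t • (y - x) ∈ A

lemma affS_univ : AffS (Set.univ : Set (Fin m → ℝ)) := fun _ _ _ _ _ => trivial

lemma AffS.inter_zero {A : Set (Fin m → ℝ)} (hA : AffS A) (a : Fin N → Fin m → ℝ)
    (b : Fin N → ℝ) (p : Fin N) : AffS (A ∩ {x | lf a b p x = 0}) := by
  rintro x ⟨hxA, hx0⟩ y ⟨hyA, hy0⟩ t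
  refine ⟨hA x hxA y hyA t, ?_⟩
  simp only [Set.mem_setOf_eq] at *
  rw [lf_line, hx0, hy0]; ring

lemma AffS.convex {A : Set (Fin m → ℝ)} (hA : AffS A) : Convex ℝ A := by
  intro x hx y hy s t hs ht hst
  have hs' : s = 1 - t := by linarith
  have : s • x + t • y = x + t • (y - x) := by
    subst hs'; funext j
    simp only [Pi.add_apply, Pi.smul_apply, Pi.sub_apply, smul_eq_mul]; ring
  rw [this]; exact hA x hx y hy t

lemma combo_pos {u v t : ℝ} (hu : 0 < u) (hv : 0 < v) (h0 : 0 ≤ t) (h1 : t ≤ 1) :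
    0 < u + t * (v - u) := by
  rcases h0.eq_or_lt with h | h
  · rw [← h]; simpa using hu
  · nlinarith

lemma combo_neg {u v t : ℝ} (hu : u < 0) (hv : v < 0) (h0 : 0 ≤ t) (h1 : t ≤ 1) :
    u + t * (v - u) < 0 := by
  have := combo_pos (u := -u) (v := -v) (t := t) (by linarith) (by linarith) h0 h1
  linarith

/-- the sign condition of `x` w.r.t. hyperplane `i`, prescribed by `T`. -/
def Sg (a : Fin N → Fin m → ℝ) (b : Fin N → ℝ) (T : Finset (Fin N)) (i : Fin N)
    (x : Fin m → ℝ) : Prop :=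
  if i ∈ T then 0 < lf a b i x else lf a b i x < 0

lemma sg_congr {a : Fin N → Fin m → ℝ} {b : Fin N → ℝ} {T T' : Finset (Fin N)} {i : Fin N}
    {x : Fin m → ℝ} (h : i ∈ T ↔ i ∈ T') : Sg a b T i x ↔ Sg a b T' i x := by
  unfold Sg
  by_cases hT : i ∈ T
  · rw [if_pos hT, if_pos (h.1 hT)]
  · rw [if_neg hT, if_neg (fun h' => hT (h.2 h'))]

lemma sg_ne_zero {a : Fin N → Fin m → ℝ} {b : Fin N → ℝ} {T : Finset (Fin N)} {i : Fin N}
    {x : Fin m → ℝ} (h : Sg a b T i x) : lf a b i x ≠ 0 := by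
  unfold Sg at h; split at h <;> [exact ne_of_gt h; exact ne_of_lt h]

lemma sg_of_ne {a : Fin N → Fin m → ℝ} {b : Fin N → ℝ} {i : Fin N} {x : Fin m → ℝ}
    (T : Finset (Fin N)) (hne : lf a b i x ≠ 0) (hmem : i ∈ T ↔ 0 < lf a b i x) :
    Sg a b T i x := by
  unfold Sg
  by_cases hT : i ∈ T
  · rw [if_pos hT]; exact hmem.1 hT
  · rw [if_neg hT]
    rcases hne.lt_or_gt with h | h
    · exact h
    · exact absurd (hmem.2 h) hT

lemma sg_open (a : Fin N → Fin m → ℝ) (b : Fin N → ℝ) (T I : Finset (Fin N)) :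
    IsOpen {x : Fin m → ℝ | ∀ i ∈ I, Sg a b T i x} := by
  have : {x : Fin m → ℝ | ∀ i ∈ I, Sg a b T i x} = ⋂ i ∈ I, {x | Sg a b T i x} := by
    ext x; simp
  rw [this]
  refine isOpen_biInter_finset fun i _ => ?_
  unfold Sg
  split
  · exact isOpen_lt continuous_const (lf_cont a b i)
  · exact isOpen_lt (lf_cont a b i) continuous_const

/-- the finset of feasible sign vectors on `A`, for the hyperplanes indexed by `I`. -/
noncomputable def Feas (a : Fin N → Fin m → ℝ) (b : Fin N → ℝ) (I : Finset (Fin N))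
    (A : Set (Fin m → ℝ)) : Finset (Finset (Fin N)) :=
  I.powerset.filter fun T => ∃ x ∈ A, ∀ i ∈ I, Sg a b T i x

lemma sign_const {C : Set (Fin m → ℝ)} (hC : IsPreconnected C) {g : (Fin m → ℝ) → ℝ}
    (hg : Continuous g) (h0 : ∀ z ∈ C, g z ≠ 0) {x y : Fin m → ℝ} (hx : x ∈ C) (hy : y ∈ C)
    (hgx : 0 < g x) : 0 < g y := by
  by_contra h
  have hy' : g y < 0 := lt_of_le_of_ne (not_lt.1 h) (h0 y hy)
  have himg : IsPreconnected (g '' C) := hC.image g hg.continuousOn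
  have h00 : (0 : ℝ) ∈ g '' C :=
    himg.Icc_subset ⟨y, hy, rfl⟩ ⟨x, hx, rfl⟩ ⟨hy'.le, hgx.le⟩
  obtain ⟨z, hz, hz0⟩ := h00
  exact h0 z hz hz0


/-- A nonempty affine set is not covered by finitely many proper hyperplane sections. -/
lemma avoid (a : Fin N → Fin m → ℝ) (b : Fin N → ℝ) {A : Set (Fin m → ℝ)} (hA : AffS A)
    (hne : A.Nonempty) (J : Finset (Fin N)) (h : ∀ j ∈ J, ∃ z ∈ A, lf a b j z ≠ 0) :
    ∃ z ∈ A, ∀ j ∈ J, lf a b j z ≠ 0 := by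
  induction J using Finset.induction with
  | empty => obtain ⟨z, hz⟩ := hne; exact ⟨z, hz, by simp⟩
  | @insert p J hpJ IH =>
    obtain ⟨z, hzA, hz⟩ := IH fun j hj => h j (mem_insert_of_mem hj)
    by_cases hzp : lf a b p z ≠ 0
    · exact ⟨z, hzA, fun j hj => (mem_insert.1 hj).elim (fun e => e ▸ hzp) (hz j)⟩
    push_neg at hzp
    obtain ⟨w, hwA, hw⟩ := h p (mem_insert_self _ _)
    set B : Finset ℝ :=
      insert 0 (J.image fun i => lf a b i z / (lf a b i z - lf a b i w)) with hB
    obtain ⟨t, ht⟩ := Infinite.exists_notMem_finset B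
    have ht0 : t ≠ 0 := fun e => ht (by rw [e, hB]; exact mem_insert_self _ _)
    refine ⟨z + t • (w - z), hA z hzA w hwA t, ?_⟩
    intro j hj
    rw [lf_line]
    rcases mem_insert.1 hj with rfl | hjJ
    · rw [hzp]
      simpa using mul_ne_zero ht0 (by simpa [hzp] using hw)
    · intro hcon
      have hz' := hz j hjJ
      have hc : lf a b j w - lf a b j z ≠ 0 := by
        intro e
        rw [e, mul_zero, add_zero] at hcon
        exact hz' hcon
      apply ht
      have hden : lf a b j z - lf a b j w ≠ 0 := fun e => hc (by linarith [sub_eq_zero.1 e])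
      have : t = lf a b j z / (lf a b j z - lf a b j w) := by
        field_simp
        linarith [hcon]
      rw [this, hB]
      exact mem_insert_of_mem (mem_image_of_mem _ hjJ)

/-- Solvability of subsystems of size `≤ m`. -/
lemma solv {n : ℕ} (hmn : m ≤ n) (a : Fin n → Fin m → ℝ)
    (hGP : ∀ s : Finset (Fin n), s.card = m →
      LinearIndependent ℝ (fun i : s => a (i : Fin n)))
    (s : Finset (Fin n)) (hs : s.card ≤ m) (c : Fin n → ℝ) :
    ∃ x : Fin m → ℝ, ∀ i ∈ s, ∑ j, a i j * x j = c i := by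
  obtain ⟨s', hss', _, hs'card⟩ :=
    Finset.exists_subsuperset_card_eq (s.subset_univ) hs (by simpa using hmn)
  have hind := hGP s' hs'card
  let e : ↥s' ≃ Fin m := Fintype.equivFinOfCardEq (by rw [Fintype.card_coe, hs'card])
  let M : Matrix (Fin m) (Fin m) ℝ := Matrix.of fun k j => a ((e.symm k : ↥s') : Fin n) j
  have hrows : LinearIndependent ℝ (fun k => M k) := by
    have : (fun k => M k) = (fun i : s' => a (i : Fin n)) ∘ e.symm := rfl
    rw [this]
    exact hind.comp e.symm e.symm.injective
  have hunit : IsUnit M := Matrix.linearIndependent_rows_iff_isUnit.mp hrows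
  have hsurj : Function.Surjective M.mulVec := Matrix.mulVec_surjective_iff_isUnit.2 hunit
  obtain ⟨x, hx⟩ := hsurj fun k => c ((e.symm k : ↥s') : Fin n)
  refine ⟨x, fun i hi => ?_⟩
  have hkey : M.mulVec x (e ⟨i, hss' hi⟩) = c i := by
    rw [hx]
    simp
  simpa [M, Matrix.mulVec, dotProduct, Equiv.symm_apply_apply] using hkey


lemma sum_choose_zero (d : ℕ) : ∑ k ∈ Finset.range (d + 1), Nat.choose 0 k = 1 := by
  induction d with
  | zero => simp
  | succ d ih => rw [Finset.sum_range_succ, ih, Nat.choose_zero_succ]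

lemma pascal_sum (c d : ℕ) :
    ∑ k ∈ Finset.range (d + 1), (c + 1).choose k
      = (∑ k ∈ Finset.range (d + 1), c.choose k) + ∑ k ∈ Finset.range d, c.choose k := by
  induction d with
  | zero => simp
  | succ d ih =>
    rw [Finset.sum_range_succ (fun k => (c + 1).choose k) (d + 1), ih,
      Finset.sum_range_succ (fun k => c.choose k) (d + 1),
      Finset.sum_range_succ (fun k => c.choose k) d, Nat.choose_succ_succ' c d]
    ring

lemma key {n : ℕ} (a : Fin n → Fin m → ℝ) (b : Fin n → ℝ) :
    ∀ (nn : ℕ) (I : Finset (Fin n)), I.card = nn → ∀ (d : ℕ) (A : Set (Fin m → ℝ)),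
    AffS A →
    (∀ s ⊆ I, s.card ≤ d → ∃ x ∈ A, ∀ i ∈ I, (lf a b i x = 0 ↔ i ∈ s)) →
    (∀ x ∈ A, (I.filter fun i => lf a b i x = 0).card ≤ d) →
    (Feas a b I A).card = ∑ k ∈ Finset.range (d + 1), nn.choose k := by
  intro nn
  induction nn with
  | zero =>
    intro I hI d A hA hstar hcd
    obtain rfl : I = ∅ := Finset.card_eq_zero.1 hI
    obtain ⟨x₀, hx₀A, _⟩ := hstar ∅ (Finset.Subset.refl _) (by simp)
    have hfeq : Feas a b ∅ A = {∅} := by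
      ext T
      rw [Finset.mem_singleton]
      constructor
      · intro h
        exact Finset.subset_empty.1 (Finset.mem_powerset.1 (Finset.mem_filter.1 h).1)
      · intro h
        subst h
        exact Finset.mem_filter.2 ⟨by simp, x₀, hx₀A, by simp⟩
    rw [hfeq, Finset.card_singleton, sum_choose_zero]
  | succ nn IH =>
    intro I hI d A hA hstar hcd
    rcases Nat.eq_zero_or_pos d with rfl | hd
    · -- d = 0 : a single feasible sign vector
      obtain ⟨x₀, hx₀A, hx₀⟩ := hstar ∅ (Finset.empty_subset _) (by simp)
      have hx₀ne : ∀ i ∈ I, lf a b i x₀ ≠ 0 := fun i hi h => by simpa using (hx₀ i hi).1 h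
      have hAne : ∀ z ∈ A, ∀ i ∈ I, lf a b i z ≠ 0 := by
        intro z hz i hi h
        have h1 : i ∈ I.filter (fun i => lf a b i z = 0) := mem_filter.2 ⟨hi, h⟩
        have h2 := hcd z hz
        rw [Nat.le_zero, Finset.card_eq_zero] at h2
        rw [h2] at h1
        exact absurd h1 (Finset.notMem_empty i)
      have hpre : IsPreconnected A := hA.convex.isPreconnected
      have hmem : ∀ z ∈ A, ∀ i ∈ I, (0 < lf a b i z ↔ 0 < lf a b i x₀) := by
        intro z hz i hi
        constructor
        · intro h
          exact sign_const hpre (lf_cont a b i) (fun w hw => hAne w hw i hi) hz hx₀A h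
        · intro h
          exact sign_const hpre (lf_cont a b i) (fun w hw => hAne w hw i hi) hx₀A hz h
      have hfeq : Feas a b I A = {I.filter fun i => 0 < lf a b i x₀} := by
        ext T
        rw [Finset.mem_singleton]
        constructor
        · intro hT
          obtain ⟨hpow, x, hxA, hsg⟩ := Finset.mem_filter.1 hT
          have hTsub := Finset.mem_powerset.1 hpow
          apply Finset.ext
          intro i
          constructor
          · intro hiT
            have hiI : i ∈ I := hTsub hiT
            have hs := hsg i hiI
            rw [Sg, if_pos hiT] at hs
            exact mem_filter.2 ⟨hiI, (hmem x hxA i hiI).1 hs⟩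
          · intro hiT₀
            obtain ⟨hiI, hposx₀⟩ := mem_filter.1 hiT₀
            by_contra hiT
            have hs := hsg i hiI
            rw [Sg, if_neg hiT] at hs
            have := (hmem x hxA i hiI).2 hposx₀
            linarith
        · intro h
          subst h
          refine Finset.mem_filter.2 ⟨Finset.mem_powerset.2 (filter_subset _ _),
            x₀, hx₀A, fun i hi => ?_⟩
          apply sg_of_ne _ (hx₀ne i hi)
          simp [Finset.mem_filter, hi]
      rw [hfeq, Finset.card_singleton]
      simp
    · -- d ≥ 1 : deletion-restriction step
      obtain ⟨d', rfl⟩ : ∃ d', d = d' + 1 := ⟨d - 1, (Nat.succ_pred_eq_of_pos hd).symm⟩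
      obtain ⟨p, hp⟩ := Finset.card_pos.1 (by rw [hI]; exact Nat.succ_pos nn)
      set I' := I.erase p with hI'def
      have hI'card : I'.card = nn := by
        rw [hI'def, Finset.card_erase_of_mem hp, hI]
        omega
      have hI'I : I' ⊆ I := hI'def ▸ Finset.erase_subset p I
      have hsplitI : ∀ i ∈ I, i = p ∨ i ∈ I' := by
        intro i hi
        rcases eq_or_ne i p with rfl | hne
        · exact Or.inl rfl
        · exact Or.inr (hI'def ▸ Finset.mem_erase.2 ⟨hne, hi⟩)
      obtain ⟨x₀, hx₀A, hx₀⟩ := hstar ∅ (Finset.empty_subset _) (by simp)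
      have hx₀p : lf a b p x₀ ≠ 0 := fun h => by simpa using (hx₀ p hp).1 h
      -- perturbation off the hyperplane p, staying in an open set U and in A
      have perturb : ∀ U : Set (Fin m → ℝ), IsOpen U → ∀ x ∈ A, x ∈ U → lf a b p x = 0 →
          (∃ y ∈ A, y ∈ U ∧ 0 < lf a b p y) ∧ (∃ y ∈ A, y ∈ U ∧ lf a b p y < 0) := by
        intro U hU x hxA hxU hxp
        have hcont : Continuous fun t : ℝ => x + t • (x₀ - x) := by fun_prop
        have hmemU : (fun t : ℝ => x + t • (x₀ - x)) ⁻¹' U ∈ nhds (0 : ℝ) := by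
          apply hcont.continuousAt.preimage_mem_nhds
          apply hU.mem_nhds
          simpa using hxU
        obtain ⟨ε, hε, hball⟩ := Metric.mem_nhds_iff.1 hmemU
        have hval : ∀ t : ℝ, lf a b p (x + t • (x₀ - x)) = t * lf a b p x₀ := by
          intro t
          rw [lf_line, hxp]
          ring
        have hmain : ∀ t : ℝ, |t| < ε → (x + t • (x₀ - x)) ∈ A ∧ (x + t • (x₀ - x)) ∈ U := by
          intro t ht
          refine ⟨hA x hxA x₀ hx₀A t, hball ?_⟩
          simpa [Metric.mem_ball, Real.dist_eq] using ht
        rcases hx₀p.lt_or_gt with hneg | hpos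
        · constructor
          · refine ⟨x + (-(ε / 2)) • (x₀ - x), (hmain _ ?_).1, (hmain _ ?_).2, ?_⟩
            · rw [abs_neg, abs_of_pos (by linarith)]; linarith
            · rw [abs_neg, abs_of_pos (by linarith)]; linarith
            · rw [hval]; nlinarith
          · refine ⟨x + (ε / 2) • (x₀ - x), (hmain _ ?_).1, (hmain _ ?_).2, ?_⟩
            · rw [abs_of_pos (by linarith)]; linarith
            · rw [abs_of_pos (by linarith)]; linarith
            · rw [hval]; nlinarith
        · constructor
          · refine ⟨x + (ε / 2) • (x₀ - x), (hmain _ ?_).1, (hmain _ ?_).2, ?_⟩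
            · rw [abs_of_pos (by linarith)]; linarith
            · rw [abs_of_pos (by linarith)]; linarith
            · rw [hval]; nlinarith
          · refine ⟨x + (-(ε / 2)) • (x₀ - x), (hmain _ ?_).1, (hmain _ ?_).2, ?_⟩
            · rw [abs_neg, abs_of_pos (by linarith)]; linarith
            · rw [abs_neg, abs_of_pos (by linarith)]; linarith
            · rw [hval]; nlinarith
      -- the two half sign-vector collections
      set Pp := I'.powerset.filter
        (fun T => ∃ x ∈ A, (∀ i ∈ I', Sg a b T i x) ∧ 0 < lf a b p x) with hPp
      set Pm := I'.powerset.filter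
        (fun T => ∃ x ∈ A, (∀ i ∈ I', Sg a b T i x) ∧ lf a b p x < 0) with hPm
      have hL1 : (Feas a b I A).card = Pp.card + Pm.card := by
        have hsplit := Finset.card_filter_add_card_filter_not
          (s := Feas a b I A) (p := fun T => p ∈ T)
        have e1 : ((Feas a b I A).filter fun T => p ∈ T).card = Pp.card := by
          refine Finset.card_bij' (fun T _ => T.erase p) (fun T' _ => insert p T')
            ?_hi ?_hj ?_li ?_ri
          case _hi =>
            intro T hT
            obtain ⟨hTF, hpT⟩ := Finset.mem_filter.1 hT
            obtain ⟨hpow, x, hxA, hsg⟩ := Finset.mem_filter.1 hTF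
            have hTI := Finset.mem_powerset.1 hpow
            rw [hPp, Finset.mem_filter, Finset.mem_powerset]
            refine ⟨hI'def ▸ Finset.erase_subset_erase p hTI, x, hxA, fun i hi => ?_, ?_⟩
            · have hiI : i ∈ I := hI'I hi
              have hne : i ≠ p := (Finset.mem_erase.1 (hI'def ▸ hi)).1
              refine (sg_congr ?_).2 (hsg i hiI)
              simp [Finset.mem_erase, hne]
            · have hs := hsg p hp
              rwa [Sg, if_pos hpT] at hs
          case _hj =>
            intro T' hT'
            rw [hPp, Finset.mem_filter, Finset.mem_powerset] at hT'
            obtain ⟨hT'I, x, hxA, hsg, hppos⟩ := hT'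
            have hpT' : p ∉ T' := fun h => (Finset.mem_erase.1 (hI'def ▸ hT'I h)).1 rfl
            rw [Finset.mem_filter]
            constructor
            · refine Finset.mem_filter.2 ⟨Finset.mem_powerset.2 ?_, x, hxA, fun i hi => ?_⟩
              · exact Finset.insert_subset hp (hT'I.trans hI'I)
              · rcases hsplitI i hi with rfl | hi'
                · rw [Sg, if_pos (Finset.mem_insert_self i T')]
                  exact hppos
                · have hne : i ≠ p := (Finset.mem_erase.1 (hI'def ▸ hi')).1
                  refine (sg_congr ?_).2 (hsg i hi')
                  simp [Finset.mem_insert, hne]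
            · exact Finset.mem_insert_self p T'
          case _li =>
            intro T hT
            exact Finset.insert_erase (Finset.mem_filter.1 hT).2
          case _ri =>
            intro T' hT'
            apply Finset.erase_insert
            rw [hPp, Finset.mem_filter, Finset.mem_powerset] at hT'
            exact fun h => (Finset.mem_erase.1 (hI'def ▸ hT'.1 h)).1 rfl
        have e2 : ((Feas a b I A).filter fun T => ¬ p ∈ T) = Pm := by
          ext T
          rw [Finset.mem_filter, hPm, Finset.mem_filter, Finset.mem_powerset]
          constructor
          · rintro ⟨hTF, hpT⟩
            obtain ⟨hpow, x, hxA, hsg⟩ := Finset.mem_filter.1 hTF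
            have hTI := Finset.mem_powerset.1 hpow
            refine ⟨hI'def ▸ Finset.subset_erase.2 ⟨hTI, hpT⟩, x, hxA, fun i hi => hsg i (hI'I hi), ?_⟩
            have hs := hsg p hp
            rwa [Sg, if_neg hpT] at hs
          · rintro ⟨hTI', x, hxA, hsg, hneg⟩
            have hpT : p ∉ T := fun h => (Finset.mem_erase.1 (hI'def ▸ hTI' h)).1 rfl
            refine ⟨Finset.mem_filter.2 ⟨Finset.mem_powerset.2 (hTI'.trans hI'I), x, hxA,
              fun i hi => ?_⟩, hpT⟩
            rcases hsplitI i hi with rfl | hi'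
            · rw [Sg, if_neg hpT]
              exact hneg
            · exact hsg i hi'
        rw [← hsplit, e1, e2]
      have hL2 : Pp ∪ Pm = Feas a b I' A := by
        ext T
        rw [Finset.mem_union, hPp, hPm, Feas, Finset.mem_filter, Finset.mem_filter,
          Finset.mem_filter]
        constructor
        · rintro (⟨hT, x, hxA, hsg, _⟩ | ⟨hT, x, hxA, hsg, _⟩) <;> exact ⟨hT, x, hxA, hsg⟩
        · rintro ⟨hT, x, hxA, hsg⟩
          by_cases hxp : lf a b p x = 0
          · obtain ⟨⟨y, hyA, hyU, hyp⟩, _⟩ :=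
              perturb {y | ∀ i ∈ I', Sg a b T i y} (sg_open a b T I') x hxA hsg hxp
            exact Or.inl ⟨hT, y, hyA, hyU, hyp⟩
          · rcases Ne.lt_or_gt hxp with h | h
            · exact Or.inr ⟨hT, x, hxA, hsg, h⟩
            · exact Or.inl ⟨hT, x, hxA, hsg, h⟩
      have hL3 : Pp ∩ Pm = Feas a b I' (A ∩ {x | lf a b p x = 0}) := by
        ext T
        rw [Finset.mem_inter, hPp, hPm, Feas, Finset.mem_filter, Finset.mem_filter,
          Finset.mem_filter]
        constructor
        · rintro ⟨⟨hT, xp, hxpA, hsgp, hpp⟩, ⟨_, xm, hxmA, hsgm, hpm⟩⟩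
          set u := lf a b p xm with hu
          set v := lf a b p xp with hv
          set t₀ := u / (u - v) with ht₀
          have hdenom : u - v ≠ 0 := by
            intro h
            rw [sub_eq_zero] at h
            rw [h] at hpm
            linarith
          have hrw : u / (u - v) = -u / (v - u) := by
            rw [show v - u = -(u - v) by ring, neg_div_neg_eq]
          have ht₀0 : 0 ≤ t₀ := by
            rw [ht₀, hrw]
            exact div_nonneg (by linarith) (by linarith)
          have ht₀1 : t₀ ≤ 1 := by
            rw [ht₀, hrw]
            rw [div_le_one (by linarith)]
            linarith
          refine ⟨hT, xm + t₀ • (xp - xm), ⟨hA xm hxmA xp hxpA t₀, ?_⟩, fun i hi => ?_⟩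
          · show lf a b p (xm + t₀ • (xp - xm)) = 0
            rw [lf_line, ← hu, ← hv, ht₀]
            field_simp
            ring
          · have hsgi := hsgm i hi
            have hsgi' := hsgp i hi
            by_cases hiT : i ∈ T
            · rw [Sg, if_pos hiT] at hsgi hsgi' ⊢
              rw [lf_line]
              exact combo_pos hsgi hsgi' ht₀0 ht₀1
            · rw [Sg, if_neg hiT] at hsgi hsgi' ⊢
              rw [lf_line]
              exact combo_neg hsgi hsgi' ht₀0 ht₀1
        · rintro ⟨hT, x, ⟨hxA, hx0⟩, hsg⟩
          obtain ⟨⟨yp, hypA, hypU, hypp⟩, ⟨ym, hymA, hymU, hymp⟩⟩ :=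
            perturb {y | ∀ i ∈ I', Sg a b T i y} (sg_open a b T I') x hxA hsg hx0
          exact ⟨⟨hT, yp, hypA, hypU, hypp⟩, ⟨hT, ym, hymA, hymU, hymp⟩⟩
      have hcards : (Feas a b I A).card
          = (Feas a b I' A).card + (Feas a b I' (A ∩ {x | lf a b p x = 0})).card := by
        have hui := Finset.card_union_add_card_inter Pp Pm
        rw [hL2, hL3] at hui
        omega
      have hstar1 : ∀ s ⊆ I', s.card ≤ d' + 1 →
          ∃ x ∈ A, ∀ i ∈ I', (lf a b i x = 0 ↔ i ∈ s) := by
        intro s hs hsc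
        obtain ⟨x, hxA, hx⟩ := hstar s (hs.trans hI'I) hsc
        exact ⟨x, hxA, fun i hi => hx i (hI'I hi)⟩
      have hcd1 : ∀ x ∈ A, (I'.filter fun i => lf a b i x = 0).card ≤ d' + 1 := by
        intro x hx
        exact le_trans (Finset.card_le_card (Finset.filter_subset_filter _ hI'I)) (hcd x hx)
      have hA' : AffS (A ∩ {x | lf a b p x = 0}) := hA.inter_zero a b p
      have hstar2 : ∀ s ⊆ I', s.card ≤ d' →
          ∃ x ∈ A ∩ {x | lf a b p x = 0}, ∀ i ∈ I', (lf a b i x = 0 ↔ i ∈ s) := by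
        intro s hs hsc
        have hps : p ∉ s := fun h => (Finset.mem_erase.1 (hI'def ▸ hs h)).1 rfl
        obtain ⟨x, hxA, hx⟩ := hstar (insert p s)
          (Finset.insert_subset hp (hs.trans hI'I))
          (by rw [Finset.card_insert_of_notMem hps]; omega)
        refine ⟨x, ⟨hxA, (hx p hp).2 (Finset.mem_insert_self p s)⟩, fun i hi => ?_⟩
        have hne : i ≠ p := (Finset.mem_erase.1 (hI'def ▸ hi)).1
        rw [hx i (hI'I hi), Finset.mem_insert]
        simp [hne]
      have hcd2 : ∀ x ∈ A ∩ {x | lf a b p x = 0},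
          (I'.filter fun i => lf a b i x = 0).card ≤ d' := by
        rintro x ⟨hxA, hx0⟩
        have h1 : I'.filter (fun i => lf a b i x = 0)
            = (I.filter fun i => lf a b i x = 0).erase p := by
          rw [hI'def, Finset.filter_erase]
        have hpf : p ∈ I.filter fun i => lf a b i x = 0 := Finset.mem_filter.2 ⟨hp, hx0⟩
        rw [h1, Finset.card_erase_of_mem hpf]
        have := hcd x hxA
        have hcpos : 1 ≤ (I.filter fun i => lf a b i x = 0).card :=
          Finset.card_pos.2 ⟨p, hpf⟩
        omega
      have h1 := IH I' hI'card (d' + 1) A hA hstar1 hcd1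
      have h2 := IH I' hI'card d' (A ∩ {x | lf a b p x = 0}) hA' hstar2 hcd2
      rw [hcards, h1, h2, pascal_sum]


end GPRC

open Finset GPRC in
/-- An arrangement of `n ≥ m` hyperplanes in `ℝ^m` in general position (every `m` of the
normals linearly independent and no point on more than `m` hyperplanes) has exactly
`∑_{i=0}^{m} C(n,i)` regions. -/
theorem general_position_region_count (m n : ℕ) (hm : 1 ≤ m) (hmn : m ≤ n)
    (a : Fin n → Fin m → ℝ) (b : Fin n → ℝ) (ha : ∀ i, a i ≠ 0)
    (hGP : ∀ s : Finset (Fin n), s.card = m →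
      LinearIndependent ℝ (fun i : s => a (i : Fin n)))
    (hpt : ∀ x : Fin m → ℝ, {i : Fin n | ∑ j, a i j * x j = b i}.ncard ≤ m) :
    {C : Set (Fin m → ℝ) |
        ∃ x ∈ {x : Fin m → ℝ | ∀ i, ∑ j, a i j * x j ≠ b i},
          C = connectedComponentIn {x : Fin m → ℝ | ∀ i, ∑ j, a i j * x j ≠ b i} x}.ncard
      = ∑ i ∈ Finset.range (m + 1), n.choose i := by
  classical
  have hSeq : {x : Fin m → ℝ | ∀ i, ∑ j, a i j * x j ≠ b i}
      = {x : Fin m → ℝ | ∀ i, lf a b i x ≠ 0} := by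
    ext x
    simp [lf, sub_ne_zero]
  rw [hSeq]
  set S := {x : Fin m → ℝ | ∀ i, lf a b i x ≠ 0} with hS
  have hstarU : ∀ s ⊆ (univ : Finset (Fin n)), s.card ≤ m →
      ∃ x ∈ (Set.univ : Set (Fin m → ℝ)), ∀ i ∈ (univ : Finset (Fin n)),
        (lf a b i x = 0 ↔ i ∈ s) := by
    intro s _ hs
    have hcdfin : ∀ x : Fin m → ℝ,
        ((univ : Finset (Fin n)).filter fun i => lf a b i x = 0).card ≤ m := by
      intro x
      have hset : {i : Fin n | ∑ j, a i j * x j = b i}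
          = ↑((univ : Finset (Fin n)).filter fun i => lf a b i x = 0) := by
        ext i
        simp [lf, sub_eq_zero]
      have := hpt x
      rwa [hset, Set.ncard_coe_finset] at this
    rcases eq_or_lt_of_le hs with heq | hlt
    · obtain ⟨x, hx⟩ := solv hmn a hGP s hs b
      have hzeros : s = (univ : Finset (Fin n)).filter (fun i => lf a b i x = 0) := by
        apply Finset.eq_of_subset_of_card_le
        · intro i hi
          exact mem_filter.2 ⟨mem_univ i, sub_eq_zero.2 (hx i hi)⟩
        · rw [heq]
          exact hcdfin x
      refine ⟨x, trivial, fun i _ => ?_⟩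
      rw [hzeros, mem_filter]
      simp
    · set Z := {x : Fin m → ℝ | ∀ i ∈ s, lf a b i x = 0} with hZ
      have hZaff : AffS Z := by
        intro x hx y hy t i hi
        rw [lf_line, hx i hi, hy i hi]
        ring
      have hZne : Z.Nonempty := by
        obtain ⟨x, hx⟩ := solv hmn a hGP s hs b
        exact ⟨x, fun i hi => sub_eq_zero.2 (hx i hi)⟩
      have havoid : ∀ j ∈ (univ \ s : Finset (Fin n)), ∃ z ∈ Z, lf a b j z ≠ 0 := by
        intro j hj
        have hjs : j ∉ s := (Finset.mem_sdiff.1 hj).2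
        obtain ⟨z, hz⟩ := solv hmn a hGP (insert j s)
          (by rw [card_insert_of_notMem hjs]; omega)
          (Function.update b j (b j + 1))
        refine ⟨z, fun i hi => ?_, ?_⟩
        · have hij : i ≠ j := fun h => hjs (h ▸ hi)
          have := hz i (mem_insert_of_mem hi)
          rw [Function.update_of_ne hij] at this
          exact sub_eq_zero.2 this
        · have := hz j (mem_insert_self j s)
          rw [Function.update_self] at this
          simp [lf, this]
      obtain ⟨z, hzZ, hzero⟩ := avoid a b hZaff hZne (univ \ s) havoid
      refine ⟨z, trivial, fun i _ => ?_⟩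
      by_cases his : i ∈ s
      · simp [hzZ i his, his]
      · have := hzero i (Finset.mem_sdiff.2 ⟨mem_univ i, his⟩)
        simp [this, his]
  have hcdU : ∀ x ∈ (Set.univ : Set (Fin m → ℝ)),
      ((univ : Finset (Fin n)).filter fun i => lf a b i x = 0).card ≤ m := by
    intro x _
    have hset : {i : Fin n | ∑ j, a i j * x j = b i}
        = ↑((univ : Finset (Fin n)).filter fun i => lf a b i x = 0) := by
      ext i
      simp [lf, sub_eq_zero]
    have := hpt x
    rwa [hset, Set.ncard_coe_finset] at this
  have hkey := key a b n univ (by simp) m Set.univ affS_univ hstarU hcdU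
  have cell_sub : ∀ T : Finset (Fin n),
      {y : Fin m → ℝ | ∀ i ∈ (univ : Finset (Fin n)), Sg a b T i y} ⊆ S :=
    fun T y hy i => sg_ne_zero (hy i (mem_univ i))
  have cell_convex : ∀ T : Finset (Fin n),
      Convex ℝ {y : Fin m → ℝ | ∀ i ∈ (univ : Finset (Fin n)), Sg a b T i y} := by
    intro T x hx y hy α β hα hβ hαβ
    have hxy : α • x + β • y = x + β • (y - x) := by
      funext j
      simp only [Pi.add_apply, Pi.smul_apply, Pi.sub_apply, smul_eq_mul]
      have hα' : α = 1 - β := by linarith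
      rw [hα']
      ring
    rw [hxy]
    intro i hi
    have h1 := hx i hi
    have h2 := hy i hi
    by_cases hiT : i ∈ T
    · rw [Sg, if_pos hiT] at h1 h2 ⊢
      rw [lf_line]
      exact combo_pos h1 h2 hβ (by linarith)
    · rw [Sg, if_neg hiT] at h1 h2 ⊢
      rw [lf_line]
      exact combo_neg h1 h2 hβ (by linarith)
  have self_cell : ∀ x ∈ S, ∀ i ∈ (univ : Finset (Fin n)),
      Sg a b ((univ : Finset (Fin n)).filter fun i => 0 < lf a b i x) i x := by
    intro x hxS i _
    apply sg_of_ne _ (hxS i)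
    simp
  have comp_eq : ∀ x ∈ S, connectedComponentIn S x
      = {y : Fin m → ℝ | ∀ i ∈ (univ : Finset (Fin n)),
          Sg a b ((univ : Finset (Fin n)).filter fun i => 0 < lf a b i x) i y} := by
    intro x hxS
    apply Set.Subset.antisymm
    · intro y hy i _
      have hyS : y ∈ S := connectedComponentIn_subset S x hy
      have hxc : x ∈ connectedComponentIn S x := mem_connectedComponentIn hxS
      have hpre : IsPreconnected (connectedComponentIn S x) := isPreconnected_connectedComponentIn
      have hne0 : ∀ z ∈ connectedComponentIn S x, lf a b i z ≠ 0 :=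
        fun z hz => (connectedComponentIn_subset S x hz) i
      apply sg_of_ne _ (hyS i)
      simp only [Finset.mem_filter, Finset.mem_univ, true_and]
      constructor
      · intro h
        exact sign_const hpre (lf_cont a b i) hne0 hxc hy h
      · intro h
        exact sign_const hpre (lf_cont a b i) hne0 hy hxc h
    · exact (cell_convex _).isPreconnected.subset_connectedComponentIn
        (self_cell x hxS) (cell_sub _)
  have hreg : {C : Set (Fin m → ℝ) | ∃ x ∈ S, C = connectedComponentIn S x}
      = (fun T : Finset (Fin n) =>
          {y : Fin m → ℝ | ∀ i ∈ (univ : Finset (Fin n)), Sg a b T i y}) ''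
        ↑(Feas a b univ Set.univ) := by
    ext C
    simp only [Set.mem_setOf_eq, Set.mem_image, Finset.mem_coe]
    constructor
    · rintro ⟨x, hxS, rfl⟩
      refine ⟨(univ : Finset (Fin n)).filter fun i => 0 < lf a b i x, ?_, (comp_eq x hxS).symm⟩
      exact Finset.mem_filter.2 ⟨Finset.mem_powerset.2 (subset_univ _), x, trivial, self_cell x hxS⟩
    · rintro ⟨T, hT, rfl⟩
      obtain ⟨hpow, x, -, hsg⟩ := Finset.mem_filter.1 hT
      have hxS : x ∈ S := fun i => sg_ne_zero (hsg i (mem_univ i))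
      have hTx : (univ : Finset (Fin n)).filter (fun i => 0 < lf a b i x) = T := by
        ext i
        simp only [mem_filter, mem_univ, true_and]
        constructor
        · intro h
          by_contra hiT
          have h2 := hsg i (mem_univ i)
          rw [Sg, if_neg hiT] at h2
          linarith
        · intro h
          have h2 := hsg i (mem_univ i)
          rwa [Sg, if_pos h] at h2
      exact ⟨x, hxS, by rw [comp_eq x hxS, hTx]⟩
  have hinj : Set.InjOn (fun T : Finset (Fin n) =>
      {y : Fin m → ℝ | ∀ i ∈ (univ : Finset (Fin n)), Sg a b T i y})
      ↑(Feas a b univ Set.univ) := by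
    intro T₁ h₁ T₂ h₂ hC
    simp only [Finset.mem_coe] at h₁
    obtain ⟨-, x₁, -, hsg₁⟩ := Finset.mem_filter.1 h₁
    have hC' : {y : Fin m → ℝ | ∀ i ∈ (univ : Finset (Fin n)), Sg a b T₁ i y}
        = {y : Fin m → ℝ | ∀ i ∈ (univ : Finset (Fin n)), Sg a b T₂ i y} := hC
    have hx₁ : x₁ ∈ {y : Fin m → ℝ | ∀ i ∈ (univ : Finset (Fin n)), Sg a b T₂ i y} := by
      rw [← hC']
      exact fun i hi => hsg₁ i hi
    ext i
    have h1 := hsg₁ i (mem_univ i)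
    have h2 := hx₁ i (mem_univ i)
    constructor
    · intro hiT₁
      rw [Sg, if_pos hiT₁] at h1
      by_contra hiT₂
      rw [Sg, if_neg hiT₂] at h2
      linarith
    · intro hiT₂
      rw [Sg, if_pos hiT₂] at h2
      by_contra hiT₁
      rw [Sg, if_neg hiT₁] at h1
      linarith
  rw [hreg, Set.ncard_image_of_injOn hinj, Set.ncard_coe_finset, hkey]
end
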